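/- arXiv:0907.0354 — 7 statements merged into one kernel-verified Lean document; each statement's English description precedes it below -/
import Mathlib

section
/- Let α : M → ℝ be a smooth function and define f : M → M by f(x) = Φ(x, α(x)). Then for every x ∈ M, the differential of f at x sends F(x) to (1 + dα_x(F(x))) · F(f(x)), where dα_x(F(x)) denotes the derivative of α along F at x. In particular, if f is a diffeomorphism (or a germ of diffeomorphism at a point z), then the pushforward vector field satisfies f_* F = (1 + F(α)) · F, i.e. f_* F is a reparametrization of F. -/
open scoped Manifold

/-- Let `α : M → ℝ` be smooth and `f(x) = Φ(x, α(x))`.  Then for every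
`x`, the differential of `f` at `x` sends `F(x)` to `(1 + dα_x(F(x))) • F(f(x))`.
In particular, if `f` is a diffeomorphism with inverse `g`, then the pushforward vector
field satisfies `f_* F = (1 + F(α)) • F`, i.e. `f_* F` is a reparametrization of `F`. -/
theorem pushforward_of_shift_is_reparametrization
    {E : Type*} [NormedAddCommGroup E] [NormedSpace ℝ E] [FiniteDimensional ℝ E]
    {H : Type*} [TopologicalSpace H] {I : ModelWithCorners ℝ E H}
    {M : Type*} [TopologicalSpace M] [ChartedSpace H M] [IsManifold I (⊤ : ℕ∞) M]
    -- the smooth vector field `F`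
    (F : (x : M) → TangentSpace I x)
    (hF : ContMDiff I I.tangent (⊤ : ℕ∞) (fun x => (⟨x, F x⟩ : TangentBundle I M)))
    -- `Φ` is the global flow of `F`
    (Φ : M → ℝ → M)
    (hΦ_smooth : ContMDiff (I.prod 𝓘(ℝ, ℝ)) I (⊤ : ℕ∞) (fun p : M × ℝ => Φ p.1 p.2))
    (hΦ_zero : ∀ x, Φ x 0 = x)
    (hΦ_add : ∀ x t s, Φ (Φ x t) s = Φ x (t + s))
    (hΦ_deriv : ∀ x t, mfderiv 𝓘(ℝ, ℝ) I (Φ x) t (1 : ℝ) = F (Φ x t))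
    -- a smooth function `α` and the shift map `f` it defines
    (α : M → ℝ) (hα : ContMDiff I 𝓘(ℝ, ℝ) (⊤ : ℕ∞) α)
    (f : M → M) (hf : ∀ x, f x = Φ x (α x)) :
    -- the differential of `f` at `x` sends `F x` to `(1 + dα_x(F x)) • F (f x)`
    (∀ x : M, mfderiv I I f x (F x) =
        ((1 : ℝ) + (show ℝ from mfderiv I 𝓘(ℝ, ℝ) α x (F x))) • F (f x)) ∧
    -- in particular, if `f` is a diffeomorphism with inverse `g`, then
    -- `(f_* F)(y) = (1 + F(α))(f⁻¹ y) • F(y)`, a reparametrization of `F`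
    (∀ g : M → M, Function.LeftInverse g f → Function.RightInverse g f →
      ∀ y : M, mfderiv I I f (g y) (F (g y)) =
        ((1 : ℝ) + (show ℝ from mfderiv I 𝓘(ℝ, ℝ) α (g y) (F (g y)))) • F y) := by
  have Fcongr : ∀ p q : M, p = q → (F p : E) = F q := by rintro p q rfl; rfl
  have hf' : f = fun y => Φ y (α y) := funext hf
  subst hf'
  have hleft : ∀ t : ℝ, ContMDiff I I (⊤ : ℕ∞) (fun y => Φ y t) := fun t =>
    hΦ_smooth.comp (contMDiff_id.prodMk contMDiff_const)
  have hright : ∀ x : M, ContMDiff 𝓘(ℝ, ℝ) I (⊤ : ℕ∞) (Φ x) := fun x =>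
    hΦ_smooth.comp (contMDiff_const.prodMk contMDiff_id)
  have mcongr : ∀ (t : ℝ) (p q : M), p = q → ∀ v : E,
      (mfderiv I I (fun y => Φ y t) p v : E) = mfderiv I I (fun y => Φ y t) q v := by
    rintro t p q rfl v; rfl
  -- the time-`t` flow map pushes `F` forward to itself, at points of the form `Φ x 0`
  have key2 : ∀ (x : M) (t : ℝ),
      (mfderiv I I (fun y => Φ y t) (Φ x 0) (F (Φ x 0)) : E) = F (Φ (Φ x 0) t) := by
    intro x t
    have h1 : mfderiv 𝓘(ℝ, ℝ) I ((fun y => Φ y t) ∘ (Φ x)) 0 (1 : ℝ) =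
        mfderiv I I (fun y => Φ y t) (Φ x 0) (mfderiv 𝓘(ℝ, ℝ) I (Φ x) 0 (1 : ℝ)) := by
      rw [mfderiv_comp (0 : ℝ) ((hleft t).mdifferentiableAt (by simp))
        ((hright x).mdifferentiableAt (by simp))]
      rfl
    rw [hΦ_deriv x 0] at h1
    have hadd : HasMFDerivAt 𝓘(ℝ, ℝ) 𝓘(ℝ, ℝ) (fun s : ℝ => s + t) 0
        (ContinuousLinearMap.id ℝ ℝ) := by
      refine hasMFDerivAt_iff_hasFDerivAt.mpr ?_
      exact (hasFDerivAt_id (𝕜 := ℝ) (0 : ℝ)).add_const t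
    have h2 : mfderiv 𝓘(ℝ, ℝ) I ((Φ x) ∘ (fun s : ℝ => s + t)) 0 (1 : ℝ) =
        mfderiv 𝓘(ℝ, ℝ) I (Φ x) (0 + t) (mfderiv 𝓘(ℝ, ℝ) 𝓘(ℝ, ℝ) (fun s : ℝ => s + t) 0 (1 : ℝ)) := by
      rw [mfderiv_comp (0 : ℝ) ((hright x).mdifferentiableAt (by simp)) hadd.mdifferentiableAt]
      rfl
    have hone : mfderiv 𝓘(ℝ, ℝ) 𝓘(ℝ, ℝ) (fun s : ℝ => s + t) 0 (1 : ℝ) = (1 : ℝ) := by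
      rw [hadd.mfderiv]; rfl
    rw [hone] at h2
    have hfun : ((fun y => Φ y t) ∘ (Φ x) : ℝ → M) = (Φ x) ∘ (fun s : ℝ => s + t) := by
      funext s; exact hΦ_add x s t
    rw [← h1, hfun, h2, hΦ_deriv x (0 + t)]
    exact Fcongr _ _ (by rw [hΦ_add x 0 t])
  have key : ∀ (x : M) (t : ℝ),
      (mfderiv I I (fun y => Φ y t) x (F x) : E) = F (Φ x t) := by
    intro x t
    calc (show E from mfderiv I I (fun y => Φ y t) x (F x))
        = (show E from mfderiv I I (fun y => Φ y t) x (F (Φ x 0))) := by rw [Fcongr _ _ (hΦ_zero x)]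
      _ = (show E from mfderiv I I (fun y => Φ y t) (Φ x 0) (F (Φ x 0))) :=
          (mcongr t (Φ x 0) x (hΦ_zero x) _).symm
      _ = (show E from F (Φ (Φ x 0) t)) := key2 x t
      _ = (show E from F (Φ x t)) := Fcongr _ _ (by rw [hΦ_zero x])
  -- main computation
  have main : ∀ x : M, mfderiv I I (fun y => Φ y (α y)) x (F x) =
      ((1 : ℝ) + (show ℝ from mfderiv I 𝓘(ℝ, ℝ) α x (F x))) • F (Φ x (α x)) := by
    intro x
    set a : ℝ := mfderiv I 𝓘(ℝ, ℝ) α x (F x) with ha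
    have hpr : ContMDiff I (I.prod 𝓘(ℝ, ℝ)) (⊤ : ℕ∞) (fun y : M => (y, α y)) :=
      contMDiff_id.prodMk hα
    have hcomp :
        mfderiv I I (fun y => Φ y (α y)) x =
          (mfderiv (I.prod 𝓘(ℝ, ℝ)) I (fun p : M × ℝ => Φ p.1 p.2) (x, α x)).comp
            (mfderiv I (I.prod 𝓘(ℝ, ℝ)) (fun y : M => (y, α y)) x) :=
      mfderiv_comp x (hΦ_smooth.mdifferentiableAt (by simp)) (hpr.mdifferentiableAt (by simp))
    have hidm : mfderiv I I (fun y : M => y) x = ContinuousLinearMap.id ℝ (TangentSpace I x) :=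
      HasMFDerivAt.mfderiv (hasMFDerivAt_id x)
    have hprd : mfderiv I (I.prod 𝓘(ℝ, ℝ)) (fun y : M => (y, α y)) x (F x) = (F x, a) := by
      rw [MDifferentiableAt.mfderiv_prod (f := fun y : M => y)
        (mdifferentiableAt_id) (hα.mdifferentiableAt (by simp))]
      rw [hidm]
      rfl
    have hsplit := mfderiv_prod_eq_add_apply
      (f := fun p : M × ℝ => Φ p.1 p.2) (p := (x, α x)) (v := ((F x, a) : TangentSpace (I.prod 𝓘(ℝ, ℝ)) (x, α x)))
      (hΦ_smooth.mdifferentiableAt (by simp))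
    rw [hcomp, ContinuousLinearMap.comp_apply, hprd]
    erw [hsplit]
    have hsnd : mfderiv 𝓘(ℝ, ℝ) I (fun z : ℝ => Φ x z) (α x) a = a • F (Φ x (α x)) := by
      have h1 : (a : ℝ) = a • (1 : ℝ) := by simp
      erw [h1, ContinuousLinearMap.map_smul]
      rw [show (mfderiv 𝓘(ℝ, ℝ) I (fun z : ℝ => Φ x z) (α x) (1 : ℝ)) = F (Φ x (α x)) from
        hΦ_deriv x (α x)]
      simp
    rw [key x (α x), hsnd, add_smul, one_smul]
  refine ⟨main, ?_⟩
  intro g _ hg2 y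
  rw [main (g y)]
  rw [Fcongr _ _ (hg2 y)]
  rfl
end

section
/- Let α : M → ℝ be a smooth function such that f(x) = Φ(x, α(x)) defines a diffeomorphism f of M. Then the shift set of the pushforward field f_* F equals the shift set of F; concretely, since the global flow of f_* F is t ↦ f ∘ Φ_t ∘ f⁻¹, the set of maps { y ↦ f(Φ(f⁻¹(y), β(y))) : β ∈ C^∞(M,ℝ) } coincides with Sh(F). -/
open scoped Manifold

/-- Let `α : M → ℝ` be smooth such that `f(x) = Φ(x, α(x))` is a
diffeomorphism of `M` (with smooth inverse `g`).  The global flow of the pushforward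
field `f_* F` is `t ↦ f ∘ Φ_t ∘ f⁻¹`, so the shift set of `f_* F` is
`{ y ↦ f (Φ (f⁻¹ y) (β y)) : β ∈ C^∞(M,ℝ) }`; this set coincides with `Sh(F)`. -/
theorem shift_set_of_pushforward_eq
    {E : Type*} [NormedAddCommGroup E] [NormedSpace ℝ E] [FiniteDimensional ℝ E]
    {H : Type*} [TopologicalSpace H] {I : ModelWithCorners ℝ E H}
    {M : Type*} [TopologicalSpace M] [ChartedSpace H M] [IsManifold I (⊤ : ℕ∞) M]
    -- the smooth vector field `F`
    (F : (x : M) → TangentSpace I x)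
    (hF : ContMDiff I I.tangent (⊤ : ℕ∞) (fun x => (⟨x, F x⟩ : TangentBundle I M)))
    -- `Φ` is the global flow of `F`
    (Φ : M → ℝ → M)
    (hΦ_smooth : ContMDiff (I.prod 𝓘(ℝ, ℝ)) I (⊤ : ℕ∞) (fun p : M × ℝ => Φ p.1 p.2))
    (hΦ_zero : ∀ x, Φ x 0 = x)
    (hΦ_add : ∀ x t s, Φ (Φ x t) s = Φ x (t + s))
    (hΦ_deriv : ∀ x t, mfderiv 𝓘(ℝ, ℝ) I (Φ x) t (1 : ℝ) = F (Φ x t))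
    -- a smooth function `α` whose shift map `f` is a diffeomorphism with inverse `g`
    (α : M → ℝ) (hα : ContMDiff I 𝓘(ℝ, ℝ) (⊤ : ℕ∞) α)
    (f : M → M) (hf : ∀ x, f x = Φ x (α x))
    (g : M → M) (hg : ContMDiff I I (⊤ : ℕ∞) g)
    (hgf : Function.LeftInverse g f) (hfg : Function.RightInverse g f) :
    {h : M → M | ∃ β : M → ℝ, ContMDiff I 𝓘(ℝ, ℝ) (⊤ : ℕ∞) β ∧
        h = fun y => f (Φ (g y) (β y))} =
      {h : M → M | ∃ δ : M → ℝ, ContMDiff I 𝓘(ℝ, ℝ) (⊤ : ℕ∞) δ ∧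
        h = fun x => Φ x (δ x)} := by
  have hΦ2 : ∀ {a : M → M} {b : M → ℝ}, ContMDiff I I (⊤ : ℕ∞) a → ContMDiff I 𝓘(ℝ, ℝ) (⊤ : ℕ∞) b →
      ContMDiff I I (⊤ : ℕ∞) (fun y => Φ (a y) (b y)) := fun ha hb =>
    hΦ_smooth.comp (ha.prodMk hb)
  -- key identity: Φ (g y) s = Φ y (s - α (g y))
  have key : ∀ (y : M) (s : ℝ), Φ (g y) s = Φ y (s - α (g y)) := by
    intro y s
    have h1 : Φ y (s - α (g y)) = Φ (Φ (g y) (α (g y))) (s - α (g y)) := by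
      rw [← hf (g y), hfg y]
    rw [h1, hΦ_add]
    ring_nf
  have hginv : ∀ z : M, g z = Φ z (-(α (g z))) := by
    intro z
    have := key z 0
    rw [hΦ_zero, zero_sub] at this
    exact this
  ext h
  simp only [Set.mem_setOf_eq]
  constructor
  · rintro ⟨β, hβ, rfl⟩
    refine ⟨fun y => β y + α (Φ (g y) (β y)) - α (g y), ?_, ?_⟩
    · exact (hβ.add (hα.comp (hΦ2 hg hβ))).sub (hα.comp hg)
    · funext y
      rw [hf, hΦ_add, key]
  · rintro ⟨δ, hδ, rfl⟩
    refine ⟨fun y => δ y - α (g (Φ y (δ y))) + α (g y), ?_, ?_⟩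
    · exact (hδ.sub (hα.comp (hg.comp (hΦ2 contMDiff_id hδ)))).add (hα.comp hg)
    · funext y
      rw [key]
      have h2 : δ y - α (g (Φ y (δ y))) + α (g y) - α (g y)
          = δ y + -(α (g (Φ y (δ y)))) := by ring
      rw [h2, ← hΦ_add, ← hginv (Φ y (δ y)), hfg]
end

section
/- Suppose θ : M → (0,∞) is a smooth strictly positive function with Φ(x, θ(x)) = x for all x ∈ M and θ(Φ(x,t)) = θ(x) for all x ∈ M, t ∈ ℝ (θ is constant along orbits of F). If the vector field θF is complete with global flow Ψ, then Ψ(x, 1) = x for all x ∈ M; that is, the shift map of θF is periodic with period function identically 1. -/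
open scoped Manifold
open Set

/-- A curve in a manifold whose manifold derivative vanishes everywhere is constant. -/
theorem constant_of_hasMFDerivAt_zero'
    {E : Type*} [NormedAddCommGroup E] [NormedSpace ℝ E]
    {H : Type*} [TopologicalSpace H] {I : ModelWithCorners ℝ E H}
    {M : Type*} [TopologicalSpace M] [ChartedSpace H M] [IsManifold I (⊤ : ℕ∞) M]
    (γ : ℝ → M)
    (h : ∀ t, HasMFDerivAt 𝓘(ℝ, ℝ) I γ t (0 : ℝ →L[ℝ] TangentSpace I (γ t))) :
    ∀ t, γ t = γ 0 := by
  have key : ∀ t₀ : ℝ, ∀ᶠ t in nhds t₀, γ t = γ t₀ := by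
    intro t₀
    have hcont : ContinuousAt γ t₀ := (h t₀).continuousAt
    have hsrc : γ ⁻¹' (chartAt H (γ t₀)).source ∈ nhds t₀ :=
      hcont.preimage_mem_nhds ((chartAt H (γ t₀)).open_source.mem_nhds (mem_chart_source _ _))
    obtain ⟨l, u, ht₀, hsub⟩ := mem_nhds_iff_exists_Ioo_subset.mp hsrc
    have hg : ∀ t ∈ Ioo l u, HasFDerivAt (fun s => extChartAt I (γ t₀) (γ s))
        (0 : ℝ →L[ℝ] E) t := by
      intro t ht
      have h1 : HasMFDerivAt I 𝓘(ℝ, E) (extChartAt I (γ t₀)) (γ t)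
          (mfderiv I I (chartAt H (γ t₀)) (γ t) : _) :=
        hasMFDerivAt_extChartAt (hsub ht)
      have h2 := h1.comp t (h t)
      erw [ContinuousLinearMap.comp_zero] at h2
      exact h2.hasFDerivAt
    have hconst : ∀ t ∈ Ioo l u,
        extChartAt I (γ t₀) (γ t) = extChartAt I (γ t₀) (γ t₀) := by
      intro t ht
      exact (convex_Ioo l u).is_const_of_fderivWithin_eq_zero
        (fun s hs => ((hg s hs).differentiableAt).differentiableWithinAt)
        (fun s hs => by
          rw [fderivWithin_of_isOpen isOpen_Ioo hs]
          exact (hg s hs).fderiv) ht ht₀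
    filter_upwards [Ioo_mem_nhds ht₀.1 ht₀.2] with t ht
    exact (extChartAt I (γ t₀)).injOn (by rw [extChartAt_source]; exact hsub ht)
      (by rw [extChartAt_source]; exact hsub ht₀) (hconst t ht)
  have hopen : IsOpen {s : ℝ | γ s = γ 0} := by
    rw [isOpen_iff_mem_nhds]; intro s hs
    filter_upwards [key s] with r hr
    show γ r = γ 0
    rw [hr]; exact hs
  have hcompl : IsOpen {s : ℝ | γ s = γ 0}ᶜ := by
    rw [isOpen_iff_mem_nhds]; intro s hs
    filter_upwards [key s] with r hr
    simp only [Set.mem_compl_iff, Set.mem_setOf_eq] at hs ⊢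
    rw [hr]; exact hs
  have huniv : {s : ℝ | γ s = γ 0} = Set.univ :=
    IsClopen.eq_univ ⟨isOpen_compl_iff.mp hcompl, hopen⟩ ⟨0, rfl⟩
  intro t
  have : t ∈ {s : ℝ | γ s = γ 0} := huniv ▸ Set.mem_univ t
  exact this


/-- Suppose `θ : M → (0,∞)` is smooth, strictly positive, with
`Φ(x, θ(x)) = x` for all `x`, and constant along the orbits of `F`
(`θ(Φ(x,t)) = θ(x)`).  If `θ • F` is complete with global flow `Ψ`, then `Ψ(x,1) = x`
for all `x`: the shift map of `θF` is periodic with period function identically `1`. -/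
theorem flow_of_theta_F_has_period_one
    {E : Type*} [NormedAddCommGroup E] [NormedSpace ℝ E] [FiniteDimensional ℝ E]
    {H : Type*} [TopologicalSpace H] {I : ModelWithCorners ℝ E H}
    {M : Type*} [TopologicalSpace M] [ChartedSpace H M] [IsManifold I (⊤ : ℕ∞) M]
    -- the smooth vector field `F`
    (F : (x : M) → TangentSpace I x)
    (hF : ContMDiff I I.tangent (⊤ : ℕ∞) (fun x => (⟨x, F x⟩ : TangentBundle I M)))
    -- `Φ` is the global flow of `F`
    (Φ : M → ℝ → M)
    (hΦ_smooth : ContMDiff (I.prod 𝓘(ℝ, ℝ)) I (⊤ : ℕ∞) (fun p : M × ℝ => Φ p.1 p.2))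
    (hΦ_zero : ∀ x, Φ x 0 = x)
    (hΦ_add : ∀ x t s, Φ (Φ x t) s = Φ x (t + s))
    (hΦ_deriv : ∀ x t, mfderiv 𝓘(ℝ, ℝ) I (Φ x) t (1 : ℝ) = F (Φ x t))
    -- the smooth strictly positive period function `θ`, constant along orbits of `F`
    (θ : M → ℝ) (hθ : ContMDiff I 𝓘(ℝ, ℝ) (⊤ : ℕ∞) θ) (hθ_pos : ∀ x, 0 < θ x)
    (hθ_per : ∀ x, Φ x (θ x) = x)
    (hθ_orbit : ∀ x t, θ (Φ x t) = θ x)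
    -- `Ψ` is the global flow of `θ • F`
    (Ψ : M → ℝ → M)
    (hΨ_smooth : ContMDiff (I.prod 𝓘(ℝ, ℝ)) I (⊤ : ℕ∞) (fun p : M × ℝ => Ψ p.1 p.2))
    (hΨ_zero : ∀ x, Ψ x 0 = x)
    (hΨ_add : ∀ x t s, Ψ (Ψ x t) s = Ψ x (t + s))
    (hΨ_deriv : ∀ x t, mfderiv 𝓘(ℝ, ℝ) I (Ψ x) t (1 : ℝ) = θ (Ψ x t) • F (Ψ x t)) :
    ∀ x, Ψ x 1 = x := by
  -- smoothness of slices
  have hΦx : ∀ x : M, ContMDiff 𝓘(ℝ, ℝ) I (⊤ : ℕ∞) (Φ x) := fun x =>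
    hΦ_smooth.comp (contMDiff_const.prodMk contMDiff_id)
  have hΦs : ∀ s : ℝ, ContMDiff I I (⊤ : ℕ∞) (fun y => Φ y s) := fun s =>
    hΦ_smooth.comp (contMDiff_id.prodMk contMDiff_const)
  have hΨx : ∀ x : M, ContMDiff 𝓘(ℝ, ℝ) I (⊤ : ℕ∞) (Ψ x) := fun x =>
    hΨ_smooth.comp (contMDiff_const.prodMk contMDiff_id)
  have mdΦx : ∀ (x : M) (t : ℝ), MDifferentiableAt 𝓘(ℝ, ℝ) I (Φ x) t := fun x t =>
    (hΦx x).mdifferentiableAt (by simp)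
  have mdΨx : ∀ (x : M) (t : ℝ), MDifferentiableAt 𝓘(ℝ, ℝ) I (Ψ x) t := fun x t =>
    (hΨx x).mdifferentiableAt (by simp)
  -- invariance of F under the flow Φ
  have hinv : ∀ (y : M) (s : ℝ), mfderiv I I (fun z => Φ z s) y (F y) = F (Φ y s) := by
    intro y s
    have hcomp : (fun z => Φ z s) ∘ (Φ y) = fun t : ℝ => Φ y (t + s) := by
      funext t; exact hΦ_add y t s
    have md2 : MDifferentiableAt 𝓘(ℝ, ℝ) 𝓘(ℝ, ℝ) (fun t : ℝ => t + s) 0 :=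
      (differentiableAt_id.add_const s).mdifferentiableAt
    have e1 : mfderiv 𝓘(ℝ, ℝ) I ((fun z => Φ z s) ∘ (Φ y)) 0 (1 : ℝ)
        = mfderiv I I (fun z => Φ z s) y (F y) := by
      rw [mfderiv_comp 0 ((hΦs s).mdifferentiableAt (by simp)) (mdΦx y 0)]
      show mfderiv I I (fun z => Φ z s) (Φ y 0) (mfderiv 𝓘(ℝ, ℝ) I (Φ y) 0 (1 : ℝ)) = _
      rw [hΦ_deriv y 0, hΦ_zero]
    have e2' : (Φ y) ∘ (fun t : ℝ => t + s) = fun t : ℝ => Φ y (t + s) := rfl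
    have e2 : mfderiv 𝓘(ℝ, ℝ) I ((Φ y) ∘ (fun t : ℝ => t + s)) 0 (1 : ℝ) = F (Φ y s) := by
      rw [mfderiv_comp 0 (mdΦx y (0 + s)) md2]
      show mfderiv 𝓘(ℝ, ℝ) I (Φ y) (0 + s)
        (mfderiv 𝓘(ℝ, ℝ) 𝓘(ℝ, ℝ) (fun t : ℝ => t + s) 0 (1 : ℝ)) = _
      have h1 : mfderiv 𝓘(ℝ, ℝ) 𝓘(ℝ, ℝ) (fun t : ℝ => t + s) 0 (1 : ℝ) = (1 : ℝ) := by
        rw [mfderiv_eq_fderiv]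
        simp [fderiv_add_const]
        rfl
      rw [h1, hΦ_deriv y (0 + s), zero_add]
    rw [← e1, hcomp, ← e2', e2]
  -- dθ(F) = 0
  have hdθF : ∀ y : M, mfderiv I 𝓘(ℝ, ℝ) θ y (F y) = 0 := by
    intro y
    have hcomp : θ ∘ (Φ y) = fun _ : ℝ => θ y := by
      funext t; exact hθ_orbit y t
    have e0 : mfderiv 𝓘(ℝ, ℝ) 𝓘(ℝ, ℝ) (θ ∘ Φ y) 0 (1 : ℝ) = 0 := by
      rw [hcomp, mfderiv_const]; rfl
    rw [mfderiv_comp 0 ((hθ.mdifferentiableAt (by simp))) (mdΦx y 0)] at e0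
    have e0' : mfderiv I 𝓘(ℝ, ℝ) θ (Φ y 0) (mfderiv 𝓘(ℝ, ℝ) I (Φ y) 0 (1 : ℝ)) = 0 := e0
    rw [hΦ_deriv y 0, hΦ_zero] at e0'
    exact e0'
  -- θ is constant along the orbits of Ψ
  have hθΨ : ∀ (x : M) (t : ℝ), θ (Ψ x t) = θ x := by
    intro x t
    have hg : ∀ t : ℝ, HasMFDerivAt 𝓘(ℝ, ℝ) 𝓘(ℝ, ℝ) (θ ∘ Ψ x) t
        (0 : ℝ →L[ℝ] ℝ) := by
      intro t
      have hmd : MDifferentiableAt 𝓘(ℝ, ℝ) 𝓘(ℝ, ℝ) (θ ∘ Ψ x) t :=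
        (hθ.mdifferentiableAt (by simp)).comp t (mdΨx x t)
      have hval : mfderiv 𝓘(ℝ, ℝ) 𝓘(ℝ, ℝ) (θ ∘ Ψ x) t (1 : ℝ) = 0 := by
        rw [mfderiv_comp t (hθ.mdifferentiableAt (by simp)) (mdΨx x t)]
        show mfderiv I 𝓘(ℝ, ℝ) θ (Ψ x t) (mfderiv 𝓘(ℝ, ℝ) I (Ψ x) t (1 : ℝ)) = 0
        rw [hΨ_deriv x t, ContinuousLinearMap.map_smul, hdθF]
        simp
      exact hmd.hasMFDerivAt.congr_mfderiv
        (ContinuousLinearMap.ext_ring (by exact hval))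
    have := constant_of_hasMFDerivAt_zero' (θ ∘ Ψ x) hg t
    simpa [Function.comp, hΨ_zero] using this
  -- the main curve
  intro x
  set q : ℝ → M × ℝ := fun t => (Ψ x t, θ x * (1 - t)) with hq_def
  set γ : ℝ → M := fun t => Φ (Ψ x t) (θ x * (1 - t)) with hγ_def
  have hb : ∀ t : ℝ, HasDerivAt (fun t : ℝ => θ x * (1 - t)) (-θ x) t := by
    intro t
    simpa using ((hasDerivAt_id t).const_sub 1).const_mul (θ x)
  have mdb : ∀ t : ℝ, MDifferentiableAt 𝓘(ℝ, ℝ) 𝓘(ℝ, ℝ) (fun t : ℝ => θ x * (1 - t)) t :=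
    fun t => ((hb t).differentiableAt).mdifferentiableAt
  have mdq : ∀ t : ℝ, MDifferentiableAt 𝓘(ℝ, ℝ) (I.prod 𝓘(ℝ, ℝ)) q t := fun t =>
    (mdΨx x t).prodMk (mdb t)
  have hq1 : ∀ t : ℝ, mfderiv 𝓘(ℝ, ℝ) (I.prod 𝓘(ℝ, ℝ)) q t (1 : ℝ)
      = (θ x • F (Ψ x t), -θ x) := by
    intro t
    rw [hq_def]
    rw [MDifferentiableAt.mfderiv_prod (mdΨx x t) (mdb t)]
    show (mfderiv 𝓘(ℝ, ℝ) I (Ψ x) t (1 : ℝ),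
      mfderiv 𝓘(ℝ, ℝ) 𝓘(ℝ, ℝ) (fun t : ℝ => θ x * (1 - t)) t (1 : ℝ)) = _
    rw [hΨ_deriv x t, hθΨ x t]
    congr 1
    rw [mfderiv_eq_fderiv, (hb t).hasFDerivAt.fderiv]
    show (1 : ℝ) • (-θ x) = -θ x
    rw [one_smul]
  have hcompγ : γ = (fun p : M × ℝ => Φ p.1 p.2) ∘ q := rfl
  have hγmd : ∀ t : ℝ, MDifferentiableAt 𝓘(ℝ, ℝ) I γ t := by
    intro t
    rw [hcompγ]
    exact (hΦ_smooth.mdifferentiableAt (by simp)).comp t (mdq t)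
  have hγ1 : ∀ t : ℝ, mfderiv 𝓘(ℝ, ℝ) I γ t (1 : ℝ) = 0 := by
    intro t
    have hΦtot : MDifferentiableAt (I.prod 𝓘(ℝ, ℝ)) I (fun p : M × ℝ => Φ p.1 p.2) (q t) :=
      hΦ_smooth.mdifferentiableAt (by simp)
    rw [hcompγ, mfderiv_comp t hΦtot (mdq t)]
    show mfderiv (I.prod 𝓘(ℝ, ℝ)) I (fun p : M × ℝ => Φ p.1 p.2) (q t)
      (mfderiv 𝓘(ℝ, ℝ) (I.prod 𝓘(ℝ, ℝ)) q t (1 : ℝ)) = 0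
    rw [mfderiv_prod_eq_add_apply hΦtot, hq1 t]
    show mfderiv I I (fun z => Φ z (θ x * (1 - t))) (Ψ x t) (θ x • F (Ψ x t))
      + mfderiv 𝓘(ℝ, ℝ) I (Φ (Ψ x t)) (θ x * (1 - t)) (-θ x) = 0
    have p1 : mfderiv I I (fun z => Φ z (θ x * (1 - t))) (Ψ x t) (θ x • F (Ψ x t))
        = θ x • F (Φ (Ψ x t) (θ x * (1 - t))) := by
      rw [ContinuousLinearMap.map_smul, hinv]
    have p2 : mfderiv 𝓘(ℝ, ℝ) I (Φ (Ψ x t)) (θ x * (1 - t)) (-θ x)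
        = -(θ x • F (Φ (Ψ x t) (θ x * (1 - t)))) := by
      have : (-θ x : ℝ) = (-θ x) • (1 : ℝ) := by simp
      erw [this, ContinuousLinearMap.map_smul, hΦ_deriv, neg_smul]
    rw [p1, p2, add_neg_cancel]
  have hγ : ∀ t, HasMFDerivAt 𝓘(ℝ, ℝ) I γ t (0 : ℝ →L[ℝ] TangentSpace I (γ t)) := fun t =>
    (hγmd t).hasMFDerivAt.congr_mfderiv
      (ContinuousLinearMap.ext_ring (by exact hγ1 t))
  have hconst := constant_of_hasMFDerivAt_zero' γ hγ 1
  have hγ1v : γ 1 = Ψ x 1 := by rw [hγ_def]; simp [hΦ_zero]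
  have hγ0v : γ 0 = x := by rw [hγ_def]; simp [hΨ_zero, hθ_per]
  rw [← hγ1v, hconst, hγ0v]
end

section
/- Let θ : M → (0,∞) be a smooth strictly positive function that is constant along orbits of F, i.e. θ(Φ(x,t)) = θ(x) for all x ∈ M, t ∈ ℝ, and suppose the vector field θF is complete with global flow Ψ. Then the following are equivalent: (a) Ψ(x,1) = x for all x ∈ M (i.e. θF yields a smooth circle action on M); (b) Φ(x, θ(x)) = x for all x ∈ M. -/
open scoped Manifold

/-- A smooth curve in a manifold with everywhere vanishing `mfderiv` is constant. -/
lemma const_of_mfderiv_zero_aux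
    {E : Type*} [NormedAddCommGroup E] [NormedSpace ℝ E]
    {H : Type*} [TopologicalSpace H] {I : ModelWithCorners ℝ E H}
    {M : Type*} [TopologicalSpace M] [ChartedSpace H M] [IsManifold I (⊤ : ℕ∞) M]
    (c : ℝ → M) (hc : ContMDiff 𝓘(ℝ, ℝ) I (⊤ : ℕ∞) c)
    (h : ∀ t, mfderiv 𝓘(ℝ, ℝ) I c t = 0) (s t : ℝ) : c s = c t := by
  have hloc : ∀ t₀ : ℝ, ∀ᶠ u in nhds t₀, c u = c t₀ := by
    intro t₀
    have hmem : c ⁻¹' (chartAt H (c t₀)).source ∈ nhds t₀ :=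
      (hc.continuous.continuousAt).preimage_mem_nhds
        ((chartAt H (c t₀)).open_source.mem_nhds (mem_chart_source _ _))
    obtain ⟨ε, hε, hball⟩ := Metric.mem_nhds_iff.mp hmem
    have hIoo : Set.Ioo (t₀ - ε) (t₀ + ε) ⊆ c ⁻¹' (chartAt H (c t₀)).source := by
      rw [← Real.ball_eq_Ioo]; exact hball
    set w : ℝ → E := (extChartAt I (c t₀)) ∘ c with hw
    have hderivw : ∀ u ∈ Set.Ioo (t₀ - ε) (t₀ + ε), HasFDerivAt w (0 : ℝ →L[ℝ] E) u := by
      intro u hu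
      have h1 := hasMFDerivAt_extChartAt (I := I) (hIoo hu)
      have h2 : HasMFDerivAt 𝓘(ℝ, ℝ) I c u 0 := by
        have := ((hc u).mdifferentiableAt (by simp)).hasMFDerivAt
        rwa [h u] at this
      have h3 := h1.comp u h2
      erw [ContinuousLinearMap.comp_zero] at h3
      exact hasMFDerivAt_iff_hasFDerivAt.mp h3
    have hconv : Convex ℝ (Set.Ioo (t₀ - ε) (t₀ + ε)) := convex_Ioo _ _
    have hdiff : DifferentiableOn ℝ w (Set.Ioo (t₀ - ε) (t₀ + ε)) := fun u hu =>
      ((hderivw u hu).differentiableAt).differentiableWithinAt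
    have hunique : UniqueDiffOn ℝ (Set.Ioo (t₀ - ε) (t₀ + ε)) :=
      (isOpen_Ioo).uniqueDiffOn
    have hconst : ∀ u ∈ Set.Ioo (t₀ - ε) (t₀ + ε), w u = w t₀ := by
      intro u hu
      have ht₀ : t₀ ∈ Set.Ioo (t₀ - ε) (t₀ + ε) := by
        constructor <;> linarith
      exact hconv.is_const_of_fderivWithin_eq_zero hdiff
        (fun z hz => ((hderivw z hz).hasFDerivWithinAt).fderivWithin (hunique z hz)) hu ht₀
    have : ∀ u ∈ Set.Ioo (t₀ - ε) (t₀ + ε), c u = c t₀ := by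
      intro u hu
      have h1 : c u ∈ (extChartAt I (c t₀)).source := by
        rw [extChartAt_source]; exact hIoo hu
      have h2 : c t₀ ∈ (extChartAt I (c t₀)).source := by
        rw [extChartAt_source]; exact mem_chart_source _ _
      have := hconst u hu
      calc c u = (extChartAt I (c t₀)).symm (w u) := ((extChartAt I (c t₀)).left_inv h1).symm
        _ = (extChartAt I (c t₀)).symm (w t₀) := by rw [this]
        _ = c t₀ := (extChartAt I (c t₀)).left_inv h2
    filter_upwards [Ioo_mem_nhds (show t₀ - ε < t₀ by linarith) (show t₀ < t₀ + ε by linarith)]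
      using this
  have hclopen : IsClopen {u : ℝ | c u = c s} := by
    constructor
    · rw [← isOpen_compl_iff]
      rw [isOpen_iff_mem_nhds]
      intro u hu
      filter_upwards [hloc u] with v hv
      simp only [Set.mem_compl_iff, Set.mem_setOf_eq] at hu ⊢
      rw [hv]; exact hu
    · rw [isOpen_iff_mem_nhds]
      intro u hu
      filter_upwards [hloc u] with v hv
      simp only [Set.mem_setOf_eq] at hu ⊢
      rw [hv]; exact hu
  have : {u : ℝ | c u = c s} = Set.univ :=
    hclopen.eq_univ ⟨s, rfl⟩
  have ht : t ∈ {u : ℝ | c u = c s} := this ▸ Set.mem_univ t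
  exact ht.symm

/-- Let `θ : M → (0,∞)` be smooth, strictly positive, constant along
orbits of `F` (`θ(Φ(x,t)) = θ(x)`), and suppose `θ • F` is complete with global flow `Ψ`.
Then the following are equivalent:
(a) `Ψ(x,1) = x` for all `x` (i.e. `θF` yields a smooth circle action on `M`);
(b) `Φ(x, θ(x)) = x` for all `x`. -/
theorem circle_action_iff_period_function
    {E : Type*} [NormedAddCommGroup E] [NormedSpace ℝ E] [FiniteDimensional ℝ E]
    {H : Type*} [TopologicalSpace H] {I : ModelWithCorners ℝ E H}
    {M : Type*} [TopologicalSpace M] [ChartedSpace H M] [IsManifold I (⊤ : ℕ∞) M]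
    -- the smooth vector field `F`
    (F : (x : M) → TangentSpace I x)
    (hF : ContMDiff I I.tangent (⊤ : ℕ∞) (fun x => (⟨x, F x⟩ : TangentBundle I M)))
    -- `Φ` is the global flow of `F`
    (Φ : M → ℝ → M)
    (hΦ_smooth : ContMDiff (I.prod 𝓘(ℝ, ℝ)) I (⊤ : ℕ∞) (fun p : M × ℝ => Φ p.1 p.2))
    (hΦ_zero : ∀ x, Φ x 0 = x)
    (hΦ_add : ∀ x t s, Φ (Φ x t) s = Φ x (t + s))
    (hΦ_deriv : ∀ x t, mfderiv 𝓘(ℝ, ℝ) I (Φ x) t (1 : ℝ) = F (Φ x t))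
    -- a smooth strictly positive function `θ` constant along orbits of `F`
    (θ : M → ℝ) (hθ : ContMDiff I 𝓘(ℝ, ℝ) (⊤ : ℕ∞) θ) (hθ_pos : ∀ x, 0 < θ x)
    (hθ_orbit : ∀ x t, θ (Φ x t) = θ x)
    -- `Ψ` is the global flow of `θ • F`
    (Ψ : M → ℝ → M)
    (hΨ_smooth : ContMDiff (I.prod 𝓘(ℝ, ℝ)) I (⊤ : ℕ∞) (fun p : M × ℝ => Ψ p.1 p.2))
    (hΨ_zero : ∀ x, Ψ x 0 = x)
    (hΨ_add : ∀ x t s, Ψ (Ψ x t) s = Ψ x (t + s))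
    (hΨ_deriv : ∀ x t, mfderiv 𝓘(ℝ, ℝ) I (Ψ x) t (1 : ℝ) = θ (Ψ x t) • F (Ψ x t)) :
    (∀ x, Ψ x 1 = x) ↔ (∀ x, Φ x (θ x) = x) := by
  -- smoothness of the partial maps
  have hΦx : ∀ y : M, ContMDiff 𝓘(ℝ, ℝ) I (⊤ : ℕ∞) (Φ y) := fun y =>
    hΦ_smooth.comp (contMDiff_const.prodMk contMDiff_id)
  have hΦs : ∀ s : ℝ, ContMDiff I I (⊤ : ℕ∞) (fun y => Φ y s) := fun s =>
    hΦ_smooth.comp (contMDiff_id.prodMk contMDiff_const)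
  have hΨx : ∀ y : M, ContMDiff 𝓘(ℝ, ℝ) I (⊤ : ℕ∞) (Ψ y) := fun y =>
    hΨ_smooth.comp (contMDiff_const.prodMk contMDiff_id)
  -- Lemma B : the flow maps intertwine `F`
  have hB : ∀ (y : M) (s : ℝ),
      mfderiv I I (fun z => Φ z s) y (F y) = F (Φ y s) := by
    intro y s
    have hgf : ((fun z => Φ z s) ∘ (Φ y)) = (Φ y) ∘ (fun t : ℝ => t + s) := by
      funext t
      simp only [Function.comp_apply, hΦ_add]
    have e1 : mfderiv 𝓘(ℝ, ℝ) I ((fun z => Φ z s) ∘ (Φ y)) 0 (1 : ℝ)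
        = mfderiv I I (fun z => Φ z s) y (F y) := by
      erw [mfderiv_comp_apply 0 (((hΦs s) (Φ y 0)).mdifferentiableAt (by simp))
        (((hΦx y) 0).mdifferentiableAt (by simp))]
      rw [hΦ_deriv y 0, hΦ_zero]
    have e2 : mfderiv 𝓘(ℝ, ℝ) I ((Φ y) ∘ (fun t : ℝ => t + s)) 0 (1 : ℝ)
        = F (Φ y s) := by
      have hm : MDifferentiableAt 𝓘(ℝ, ℝ) 𝓘(ℝ, ℝ) (fun t : ℝ => t + s) 0 :=
        ((differentiable_id.add_const s) 0).mdifferentiableAt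
      erw [mfderiv_comp_apply 0 (((hΦx y) ((0 : ℝ) + s)).mdifferentiableAt (by simp)) hm]
      have htr : mfderiv 𝓘(ℝ, ℝ) 𝓘(ℝ, ℝ) (fun t : ℝ => t + s) 0 (1 : ℝ) = (1 : ℝ) := by
        rw [mfderiv_eq_fderiv]
        simp only [fderiv_add_const, fderiv_id']
        rfl
      rw [htr, zero_add, hΦ_deriv y s]
    rw [← e1, hgf, e2]
  -- the differential of θ kills F
  have hdθ : ∀ y : M, mfderiv I 𝓘(ℝ, ℝ) θ y (F y) = 0 := by
    intro y
    have hconst : (θ ∘ Φ y) = fun _ : ℝ => θ y := by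
      funext t; simp [Function.comp, hθ_orbit]
    have e1 : mfderiv 𝓘(ℝ, ℝ) 𝓘(ℝ, ℝ) (θ ∘ Φ y) 0 (1 : ℝ)
        = mfderiv I 𝓘(ℝ, ℝ) θ y (F y) := by
      erw [mfderiv_comp_apply 0 ((hθ (Φ y 0)).mdifferentiableAt (by simp))
        (((hΦx y) 0).mdifferentiableAt (by simp))]
      rw [hΦ_deriv y 0, hΦ_zero]
    rw [← e1, hconst]
    simp; rfl
  -- θ is constant along Ψ-orbits
  have hθΨ : ∀ (x : M) (t : ℝ), θ (Ψ x t) = θ x := by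
    intro x t
    have hu : ContMDiff 𝓘(ℝ, ℝ) 𝓘(ℝ, ℝ) (⊤ : ℕ∞) (θ ∘ Ψ x) := hθ.comp (hΨx x)
    have hud : Differentiable ℝ (θ ∘ Ψ x) :=
      (contMDiff_iff_contDiff.mp hu).differentiable (by simp)
    have hderiv : ∀ u : ℝ, deriv (θ ∘ Ψ x) u = 0 := by
      intro u
      have e1 : mfderiv 𝓘(ℝ, ℝ) 𝓘(ℝ, ℝ) (θ ∘ Ψ x) u (1 : ℝ)
          = θ (Ψ x u) • mfderiv I 𝓘(ℝ, ℝ) θ (Ψ x u) (F (Ψ x u)) := by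
        erw [mfderiv_comp_apply u ((hθ (Ψ x u)).mdifferentiableAt (by simp))
          (((hΨx x) u).mdifferentiableAt (by simp))]
        rw [hΨ_deriv x u, ContinuousLinearMap.map_smul]
      rw [hdθ] at e1
      have e2 : deriv (θ ∘ Ψ x) u = mfderiv 𝓘(ℝ, ℝ) 𝓘(ℝ, ℝ) (θ ∘ Ψ x) u (1 : ℝ) := by
        rw [mfderiv_eq_fderiv]
        exact fderiv_apply_one_eq_deriv.symm
      rw [e2, e1, smul_zero]; rfl
    have := is_const_of_deriv_eq_zero hud hderiv t 0
    simpa [Function.comp, hΨ_zero] using this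
  -- the key identity : Ψ x 1 = Φ x (θ x)
  have key : ∀ x : M, Ψ x 1 = Φ x (θ x) := by
    intro x
    set c : ℝ → M := fun t => Φ (Ψ x t) (θ x * (1 - t)) with hc_def
    have hγ : ContMDiff 𝓘(ℝ, ℝ) (I.prod 𝓘(ℝ, ℝ)) (⊤ : ℕ∞)
        (fun t : ℝ => (Ψ x t, θ x * (1 - t))) := by
      refine (hΨx x).prodMk ?_
      exact contMDiff_iff_contDiff.mpr
        ((contDiff_const.sub contDiff_id).const_smul (θ x))
    have hc : ContMDiff 𝓘(ℝ, ℝ) I (⊤ : ℕ∞) c := hΦ_smooth.comp hγ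
    have hzero : ∀ t, mfderiv 𝓘(ℝ, ℝ) I c t = 0 := by
      intro t
      apply ContinuousLinearMap.ext_ring
      show mfderiv 𝓘(ℝ, ℝ) I c t (1 : ℝ) = 0
      have hcc : c = (fun p : M × ℝ => Φ p.1 p.2) ∘ (fun t : ℝ => (Ψ x t, θ x * (1 - t))) := rfl
      have hmΦ : MDifferentiableAt (I.prod 𝓘(ℝ, ℝ)) I (fun p : M × ℝ => Φ p.1 p.2)
          (Ψ x t, θ x * (1 - t)) := (hΦ_smooth _).mdifferentiableAt (by simp)
      have hmγ : MDifferentiableAt 𝓘(ℝ, ℝ) (I.prod 𝓘(ℝ, ℝ))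
          (fun t : ℝ => (Ψ x t, θ x * (1 - t))) t := (hγ t).mdifferentiableAt (by simp)
      erw [hcc, mfderiv_comp_apply t hmΦ hmγ]
      -- derivative of the curve into the product
      have hpm : mfderiv 𝓘(ℝ, ℝ) (I.prod 𝓘(ℝ, ℝ))
          (fun t : ℝ => (Ψ x t, θ x * (1 - t))) t
          = (mfderiv 𝓘(ℝ, ℝ) I (Ψ x) t).prod
            (mfderiv 𝓘(ℝ, ℝ) 𝓘(ℝ, ℝ) (fun t : ℝ => θ x * (1 - t)) t) :=
        MDifferentiableAt.mfderiv_prod (((hΨx x) t).mdifferentiableAt (by simp))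
          ((((hasDerivAt_id t).const_sub 1).const_mul
            (θ x)).differentiableAt.mdifferentiableAt)
      have hd2 : mfderiv 𝓘(ℝ, ℝ) 𝓘(ℝ, ℝ) (fun t : ℝ => θ x * (1 - t)) t (1 : ℝ)
          = θ x * (-1) := by
        have : HasDerivAt (fun t : ℝ => θ x * (1 - t)) (θ x * (-1)) t :=
          ((hasDerivAt_id t).const_sub 1).const_mul (θ x)
        rw [mfderiv_eq_fderiv, this.hasFDerivAt.fderiv]
        simp only [mul_neg, mul_one]
        exact (one_smul ℝ (-θ x)).trans (mul_neg_one (θ x)).symm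
      have happ : (mfderiv 𝓘(ℝ, ℝ) (I.prod 𝓘(ℝ, ℝ))
          (fun t : ℝ => (Ψ x t, θ x * (1 - t))) t) (1 : ℝ)
          = ((θ x • F (Ψ x t) : E), (θ x * (-1) : ℝ)) := by
        rw [hpm]
        show (mfderiv 𝓘(ℝ, ℝ) I (Ψ x) t (1 : ℝ),
          mfderiv 𝓘(ℝ, ℝ) 𝓘(ℝ, ℝ) (fun t : ℝ => θ x * (1 - t)) t (1 : ℝ))
          = ((θ x • F (Ψ x t) : E), (θ x * (-1) : ℝ))
        rw [hΨ_deriv x t, hd2, hθΨ x t]; rfl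
      rw [happ]
      erw [mfderiv_prod_eq_add_apply (f := fun p : M × ℝ => Φ p.1 p.2)
        (p := (Ψ x t, θ x * (1 - t)))
        (v := ((θ x • F (Ψ x t), θ x * (-1)) :
          TangentSpace (I.prod 𝓘(ℝ, ℝ)) (Ψ x t, θ x * (1 - t)))) hmΦ]
      have hterm1 : mfderiv I I (fun z : M => Φ z (θ x * (1 - t))) (Ψ x t)
          ((θ x • F (Ψ x t) : E)) = θ x • F (Φ (Ψ x t) (θ x * (1 - t))) := by
        rw [ContinuousLinearMap.map_smul, hB]
      have hterm2 : mfderiv 𝓘(ℝ, ℝ) I (fun r : ℝ => Φ (Ψ x t) r) (θ x * (1 - t))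
          ((θ x * (-1) : ℝ)) = (θ x * (-1)) • F (Φ (Ψ x t) (θ x * (1 - t))) := by
        have : (θ x * (-1) : ℝ) = (θ x * (-1)) • (1 : ℝ) := by simp
        erw [this, ContinuousLinearMap.map_smul, smul_eq_mul (θ x * (-1)) (1 : ℝ), mul_one]
        congr 1
        exact hΦ_deriv (Ψ x t) (θ x * (1 - t))
      rw [hterm1, hterm2]
      show θ x • F (Φ (Ψ x t) (θ x * (1 - t)))
        + (θ x * (-1)) • F (Φ (Ψ x t) (θ x * (1 - t))) = 0
      rw [mul_neg, mul_one, neg_smul, add_neg_cancel]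
    have hconst := const_of_mfderiv_zero_aux c hc hzero 1 0
    have hc1 : c 1 = Ψ x 1 := by simp [hc_def, hΦ_zero]
    have hc0 : c 0 = Φ x (θ x) := by simp [hc_def, hΨ_zero]
    rw [← hc1, ← hc0, hconst]
  constructor
  · intro h x
    rw [← key x]; exact h x
  · intro h x
    rw [key x]; exact h x
end

section
/- Suppose θ : M → (0,∞) is a smooth strictly positive function with Φ(x, θ(x)) = x for all x ∈ M, and let z ∈ M be a singular point of F (F(z) = 0), so that A_t := mfderiv at z of x ↦ Φ(x,t) is defined for all t. Then there exists a linear endomorphism D of the tangent space T_zM such that A_t = exp(t·D) for all t ∈ ℝ, and exp(θ(z)·D) = id on T_zM. -/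
open scoped Manifold
open Set Filter Topology

/-- Auxiliary lemma: a singular point of the vector field is a fixed point of the flow. -/
private lemma flow_fixed_at_singular
    {E : Type*} [NormedAddCommGroup E] [NormedSpace ℝ E] [FiniteDimensional ℝ E]
    {H : Type*} [TopologicalSpace H] {I : ModelWithCorners ℝ E H}
    {M : Type*} [TopologicalSpace M] [ChartedSpace H M] [IsManifold I (⊤ : ℕ∞) M]
    (F : (x : M) → TangentSpace I x)
    (hF : ContMDiff I I.tangent (⊤ : ℕ∞) (fun x => (⟨x, F x⟩ : TangentBundle I M)))
    (Φ : M → ℝ → M)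
    (hΦ_smooth : ContMDiff (I.prod 𝓘(ℝ, ℝ)) I (⊤ : ℕ∞) (fun p : M × ℝ => Φ p.1 p.2))
    (hΦ_zero : ∀ x, Φ x 0 = x)
    (hΦ_add : ∀ x t s, Φ (Φ x t) s = Φ x (t + s))
    (hΦ_deriv : ∀ x t, mfderiv 𝓘(ℝ, ℝ) I (Φ x) t (1 : ℝ) = F (Φ x t))
    (z : M) (hz : F z = 0) : ∀ t : ℝ, Φ z t = z := by
  have h0 : Φ z 0 = z := hΦ_zero z
  -- the flow line through `z` is a smooth curve
  have hγs : ContMDiff 𝓘(ℝ, ℝ) I (⊤ : ℕ∞) (Φ z) :=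
    hΦ_smooth.comp (contMDiff_const.prodMk contMDiff_id)
  -- it is an integral curve of `F`
  have hIC : IsMIntegralCurve (Φ z) F := by
    intro t
    refine ((hγs t).mdifferentiableAt (by simp)).hasMFDerivAt.congr_mfderiv ?_
    refine ContinuousLinearMap.ext_ring ?_
    exact (hΦ_deriv z t).trans (one_smul ℝ (F (Φ z t) : E)).symm
  have hev := (hIC.isMIntegralCurveAt 0).eventually_hasDerivAt
  rw [h0] at hev
  set φ := extChartAt I z with hφ
  set x₀ := φ z with hx₀
  -- the vector field in the chart around `z`
  have hFz := hF z
  rw [contMDiffAt_iff] at hFz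
  obtain ⟨-, hFz⟩ := hFz
  set v' : E → E := fun y =>
    tangentCoordChange I (φ.symm y) z (φ.symm y) (F (φ.symm y)) with hv'
  have hv'cd : ContDiffWithinAt ℝ 1 v' (Set.range I) x₀ := by
    have h2 := (contDiff_snd (𝕜 := ℝ) (E := E) (F := E)).contDiffAt.comp_contDiffWithinAt x₀ hFz
    exact h2.of_le (by exact_mod_cast le_top)
  have hsy : φ.symm x₀ = z := (extChartAt I z).left_inv (mem_extChartAt_source z)
  have hv'0 : v' x₀ = 0 := by
    show (tangentCoordChange I (φ.symm x₀) z (φ.symm x₀)) (F (φ.symm x₀)) = 0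
    rw [hsy, hz]
    exact (tangentCoordChange I z z z).map_zero
  set DW := fderivWithin ℝ v' (Set.range I) x₀ with hDW
  have hfd : HasFDerivWithinAt v' DW (Set.range I) x₀ :=
    (hv'cd.differentiableWithinAt one_ne_zero).hasFDerivWithinAt
  set K := ‖DW‖ + 1 with hK
  have hKb : ∀ᶠ y in 𝓝[Set.range I] x₀, ‖v' y‖ ≤ K * ‖y - x₀‖ := by
    filter_upwards [hfd.isLittleO.def one_pos] with y hy
    have h1 : ‖v' y‖ ≤ ‖v' y - v' x₀ - DW (y - x₀)‖ + ‖DW (y - x₀)‖ := by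
      calc ‖v' y‖ = ‖(v' y - v' x₀ - DW (y - x₀)) + DW (y - x₀)‖ := by
            rw [hv'0, sub_zero, sub_add_cancel]
        _ ≤ _ := norm_add_le _ _
    have h2 := DW.le_opNorm (y - x₀)
    have h3 : (0:ℝ) ≤ ‖y - x₀‖ := norm_nonneg _
    rw [hK]; nlinarith
  obtain ⟨s, hs_mem, hs_bound⟩ := hKb.exists_mem
  have hpre : ↑φ ⁻¹' s ∈ 𝓝 z := by
    rw [← map_extChartAt_nhds z] at hs_mem
    exact mem_map.mp hs_mem
  have hcont : ContinuousAt (Φ z) 0 := (hγs 0).continuousAt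
  have hE2 : ∀ᶠ t in 𝓝 (0:ℝ), Φ z t ∈ (extChartAt I z).source :=
    hcont.eventually_mem (by rw [h0]; exact extChartAt_source_mem_nhds z)
  have hE3 : ∀ᶠ t in 𝓝 (0:ℝ), φ (Φ z t) ∈ s :=
    (hcont.eventually_mem (by rw [h0]; exact hpre)).mono (fun t ht => ht)
  obtain ⟨ε, hε, hball⟩ := Metric.eventually_nhds_iff_ball.mp (hev.and (hE2.and hE3))
  have hmem : ∀ t ∈ Set.Icc (0:ℝ) (ε/2), t ∈ Metric.ball (0:ℝ) ε := by
    intro t ht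
    rw [Metric.mem_ball, Real.dist_eq, sub_zero, abs_of_nonneg ht.1]
    linarith [ht.2]
  have hmem' : ∀ t ∈ Set.Icc (0:ℝ) (ε/2), -t ∈ Metric.ball (0:ℝ) ε := by
    intro t ht
    rw [Metric.mem_ball, Real.dist_eq, sub_zero, abs_neg, abs_of_nonneg ht.1]
    linarith [ht.2]
  -- positive times
  have key : ∀ b ∈ Set.Icc (0:ℝ) (ε/2), Φ z b = z := by
    have hgron : ∀ b ∈ Set.Icc (0:ℝ) (ε/2),
        ‖(fun t => (↑φ ∘ Φ z) t - x₀) b‖ ≤ gronwallBound 0 K 0 (b - 0) := by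
      apply norm_le_gronwallBound_of_norm_deriv_right_le
        (f' := fun t => v' ((↑φ ∘ Φ z) t))
      · intro t ht
        exact (((hball t (hmem t ht)).1).sub_const x₀).continuousAt.continuousWithinAt
      · intro t ht
        have hb := hball t (hmem t (Set.Ico_subset_Icc_self ht))
        have hli : φ.symm (φ (Φ z t)) = Φ z t := (extChartAt I z).left_inv hb.2.1
        have hder : HasDerivAt (↑φ ∘ Φ z) (v' ((↑φ ∘ Φ z) t)) t := by
          refine hb.1.congr_deriv ?_
          simp only [hv', Function.comp_apply, hli]
          rw [hli]
        exact (hder.sub_const x₀).hasDerivWithinAt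
      · simp only [Function.comp_apply, h0, ← hx₀, sub_self, norm_zero, le_refl]
      · intro t ht
        rw [add_zero]
        exact hs_bound _ ((hball t (hmem t (Set.Ico_subset_Icc_self ht))).2.2)
    intro b hb
    have hb0 := hgron b hb
    rw [sub_zero, gronwallBound_ε0_δ0] at hb0
    have hb1 : φ (Φ z b) = x₀ := by
      have := norm_le_zero_iff.mp hb0
      exact sub_eq_zero.mp this
    exact (extChartAt I z).injOn (hball b (hmem b hb)).2.1 (mem_extChartAt_source z) hb1
  -- negative times
  have key' : ∀ b ∈ Set.Icc (0:ℝ) (ε/2), Φ z (-b) = z := by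
    have hgron : ∀ b ∈ Set.Icc (0:ℝ) (ε/2),
        ‖(fun t => (↑φ ∘ Φ z) (-t) - x₀) b‖ ≤ gronwallBound 0 K 0 (b - 0) := by
      apply norm_le_gronwallBound_of_norm_deriv_right_le
        (f' := fun t => -(v' ((↑φ ∘ Φ z) (-t))))
      · intro t ht
        have hb := hball (-t) (hmem' t ht)
        have hder := hb.1.scomp t (hasDerivAt_neg t)
        exact (hder.sub_const x₀).continuousAt.continuousWithinAt
      · intro t ht
        have hb := hball (-t) (hmem' t (Set.Ico_subset_Icc_self ht))
        have hli : φ.symm (φ (Φ z (-t))) = Φ z (-t) := (extChartAt I z).left_inv hb.2.1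
        have hder := hb.1.scomp t (hasDerivAt_neg t)
        have hder2 : HasDerivAt (fun u : ℝ => (↑φ ∘ Φ z) (-u)) (-(v' ((↑φ ∘ Φ z) (-t)))) t := by
          refine hder.congr_deriv ?_
          simp only [hv', Function.comp_apply, hli, neg_smul, one_smul]
          rw [hli]
        exact (hder2.sub_const x₀).hasDerivWithinAt
      · simp only [Function.comp_apply, neg_zero, h0, ← hx₀, sub_self, norm_zero, le_refl]
      · intro t ht
        rw [add_zero, norm_neg]
        exact hs_bound _ ((hball (-t) (hmem' t (Set.Ico_subset_Icc_self ht))).2.2)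
    intro b hb
    have hb0 := hgron b hb
    rw [sub_zero, gronwallBound_ε0_δ0] at hb0
    have hb1 : φ (Φ z (-b)) = x₀ := by
      have := norm_le_zero_iff.mp hb0
      exact sub_eq_zero.mp this
    exact (extChartAt I z).injOn (hball (-b) (hmem' b hb)).2.1 (mem_extChartAt_source z) hb1
  have hloc : ∀ u : ℝ, |u| ≤ ε/2 → Φ z u = z := by
    intro u hu
    rcases le_or_gt 0 u with h | h
    · exact key u ⟨h, by rwa [abs_of_nonneg h] at hu⟩
    · have := key' (-u) ⟨by linarith, by rwa [abs_of_neg h] at hu⟩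
      rwa [neg_neg] at this
  -- globalize using the group law
  intro t
  have hεpos : (0:ℝ) < ε/2 := by linarith
  obtain ⟨n, hn⟩ := exists_nat_ge (|t| / (ε/2))
  set u := t / ((n:ℝ) + 1) with hu
  have hnpos : (0:ℝ) < (n:ℝ) + 1 := by positivity
  have huabs : |u| ≤ ε/2 := by
    rw [hu, abs_div, abs_of_pos hnpos, div_le_iff₀ hnpos]
    rw [div_le_iff₀ hεpos] at hn
    nlinarith
  have hk : ∀ k : ℕ, Φ z ((k:ℝ) * u) = z := by
    intro k
    induction k with
    | zero => simpa using h0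
    | succ k ih =>
      have harith : ((k+1 : ℕ) : ℝ) * u = (k:ℝ) * u + u := by push_cast; ring
      rw [harith, ← hΦ_add z ((k:ℝ)*u) u, ih]
      exact hloc u huabs
  have hrepr : ((n+1:ℕ) : ℝ) * u = t := by
    rw [hu]
    push_cast
    field_simp
  calc Φ z t = Φ z (((n+1:ℕ):ℝ) * u) := by rw [hrepr]
    _ = z := hk (n+1)

set_option maxHeartbeats 1000000 in
set_option synthInstance.maxHeartbeats 400000 in
/-- Suppose `θ : M → (0,∞)` is smooth, strictly positive, with
`Φ(x, θ(x)) = x` for all `x`, and let `z` be a singular point of `F` (`F z = 0`), so that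
`A_t := mfderiv (x ↦ Φ(x,t))` at `z` is defined for all `t`.  Then there is a linear
endomorphism `D` of `T_zM` with `A_t = exp(t • D)` for all `t`, and
`exp(θ(z) • D) = id` on `T_zM`. -/
theorem differentials_at_singular_point_generator
    {E : Type*} [NormedAddCommGroup E] [NormedSpace ℝ E] [FiniteDimensional ℝ E]
    {H : Type*} [TopologicalSpace H] {I : ModelWithCorners ℝ E H}
    {M : Type*} [TopologicalSpace M] [ChartedSpace H M] [IsManifold I (⊤ : ℕ∞) M]
    -- the smooth vector field `F`
    (F : (x : M) → TangentSpace I x)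
    (hF : ContMDiff I I.tangent (⊤ : ℕ∞) (fun x => (⟨x, F x⟩ : TangentBundle I M)))
    -- `Φ` is the global flow of `F`
    (Φ : M → ℝ → M)
    (hΦ_smooth : ContMDiff (I.prod 𝓘(ℝ, ℝ)) I (⊤ : ℕ∞) (fun p : M × ℝ => Φ p.1 p.2))
    (hΦ_zero : ∀ x, Φ x 0 = x)
    (hΦ_add : ∀ x t s, Φ (Φ x t) s = Φ x (t + s))
    (hΦ_deriv : ∀ x t, mfderiv 𝓘(ℝ, ℝ) I (Φ x) t (1 : ℝ) = F (Φ x t))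
    -- the smooth strictly positive period function `θ`
    (θ : M → ℝ) (hθ : ContMDiff I 𝓘(ℝ, ℝ) (⊤ : ℕ∞) θ) (hθ_pos : ∀ x, 0 < θ x)
    (hθ_per : ∀ x, Φ x (θ x) = x)
    -- a singular point `z` of `F`
    (z : M) (hz : F z = 0) :
    ∃ D : TangentSpace I z →L[ℝ] TangentSpace I z,
      (∀ t : ℝ, mfderiv I I (fun x => Φ x t) z = NormedSpace.exp (𝔸 := E →L[ℝ] E) (t • D)) ∧
      NormedSpace.exp (𝔸 := E →L[ℝ] E) (θ z • D) = ContinuousLinearMap.id ℝ (TangentSpace I z) := by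
  have hfix : ∀ t : ℝ, Φ z t = z :=
    flow_fixed_at_singular F hF Φ hΦ_smooth hΦ_zero hΦ_add hΦ_deriv z hz
  set A : ℝ → (E →L[ℝ] E) := fun t => mfderiv I I (fun x => Φ x t) z with hA
  have hMD : ∀ (t : ℝ) (x : M), MDifferentiableAt I I (fun x => Φ x t) x := fun t x =>
    ((hΦ_smooth (x, t)).comp x (contMDiffAt_id.prodMk contMDiffAt_const)).mdifferentiableAt (by simp)
  -- `A` is smooth in `t`
  have hAsm : ∀ t₀ : ℝ, ContDiffAt ℝ ((⊤ : ℕ∞) : WithTop ℕ∞) A t₀ := by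
    intro t₀
    have hswap : ContMDiffAt (𝓘(ℝ, ℝ).prod I) I (⊤ : ℕ∞)
        (Function.uncurry fun (t : ℝ) (x : M) => Φ x t) (t₀, z) :=
      (hΦ_smooth (z, t₀)).comp (t₀, z) (contMDiffAt_snd.prodMk contMDiffAt_fst)
    have hsm := hswap.mfderiv (m := (⊤ : ℕ∞)) (fun (t : ℝ) (x : M) => Φ x t) (fun _ => z)
      contMDiffAt_const (by simp)
    have hsm2 : ContMDiffAt 𝓘(ℝ, ℝ) 𝓘(ℝ, E →L[ℝ] E) (⊤ : ℕ∞)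
        (inTangentCoordinates I I (fun _ : ℝ => z) (fun t : ℝ => Φ z t)
          (fun t : ℝ => mfderiv I I (fun x => Φ x t) z) t₀) t₀ := hsm
    have hcoord : inTangentCoordinates I I (fun _ : ℝ => z) (fun t : ℝ => Φ z t)
        (fun t : ℝ => mfderiv I I (fun x => Φ x t) z) t₀ = A := by
      funext t
      have h1 := inTangentCoordinates_eq (I := I) (I' := I) (fun _ : ℝ => z)
        (fun t : ℝ => Φ z t) (fun t : ℝ => mfderiv I I (fun x => Φ x t) z)
        (x₀ := t₀) (x := t)
        (by show z ∈ (chartAt H z).source; exact mem_chart_source H z)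
        (by show Φ z t ∈ (chartAt H (Φ z t₀)).source
            rw [hfix t, hfix t₀]; exact mem_chart_source H z)
      rw [h1]
      simp only [hfix]
      ext v
      simp only [ContinuousLinearMap.comp_apply]
      rw [(tangentBundleCore I M).coordChange_self (achart H z) z (mem_achart_source H z)]
      exact congrArg (A t) ((tangentBundleCore I M).coordChange_self (achart H z) z (mem_achart_source H z) v)
    rw [hcoord] at hsm2
    exact contMDiffAt_iff_contDiffAt.mp hsm2
  have hAdiff : Differentiable ℝ A := fun t =>
    (hAsm t).differentiableAt (by simp)
  have hA0 : A 0 = 1 := by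
    have key : ∀ f : M → M, f = id → A 0 = mfderiv I I f z → A 0 = 1 := by
      rintro f rfl h
      rw [h, mfderiv_id]
      rfl
    exact key _ (funext hΦ_zero) rfl
  have hAmul : ∀ t s : ℝ, A (t + s) = A s * A t := by
    intro t s
    have h1 : (fun x : M => Φ x (t + s)) = (fun x : M => Φ x s) ∘ (fun x : M => Φ x t) :=
      funext fun x => (hΦ_add x t s).symm
    have h2 := mfderiv_comp_of_eq (I := I) (I' := I) (I'' := I) (hMD s z) (hMD t z) (hfix t)
    have e1 : A (t + s) = mfderiv I I ((fun x : M => Φ x s) ∘ (fun x : M => Φ x t)) z := by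
      have h4 : ∀ f : M → M, (fun x : M => Φ x (t + s)) = f → A (t + s) = mfderiv I I f z := by
        rintro f rfl; rfl
      exact h4 _ h1
    have e2 : mfderiv I I ((fun x : M => Φ x s) ∘ (fun x : M => Φ x t)) z = A s * A t := by
      rw [h2]
      have hcongr : ∀ w : M, w = z →
          ContinuousLinearMap.comp (mfderiv I I (fun x : M => Φ x s) w)
            (mfderiv I I (fun x : M => Φ x t) z) = A s * A t := by
        rintro w rfl; rfl
      exact hcongr _ (hfix t)
    exact e1.trans e2
  set D := deriv A 0 with hD
  have hD0 : HasDerivAt A D 0 := (hAdiff 0).hasDerivAt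
  have hA' : ∀ t, HasDerivAt A (D * A t) t := by
    intro t
    have h2 : (fun s : ℝ => A (t + s)) = fun s : ℝ => A s * A t := funext fun s => hAmul t s
    have h3 : HasDerivAt (fun s : ℝ => A s * A t) (D * A t) 0 := by
      exact hD0.mul_const (A t)
    have h4 : HasDerivAt (fun s : ℝ => A (t + s)) (D * A t) 0 := h2 ▸ h3
    have h6 := HasDerivAt.comp_const_add t 0 ((hAdiff (t+0)).hasDerivAt)
    have h7 : deriv A (t + 0) = D * A t := h6.unique h4
    rw [add_zero] at h7
    exact h7 ▸ (hAdiff t).hasDerivAt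
  have hcomm : ∀ t : ℝ, Commute D (NormedSpace.exp (-(t • D))) := fun t =>
    (((Commute.refl D).smul_right t).neg_right).exp_right
  have he : ∀ t : ℝ, HasDerivAt (fun t : ℝ => NormedSpace.exp (-(t • D)))
      (-(D * NormedSpace.exp (-(t • D)))) t := by
    intro t
    have h5 := hasDerivAt_exp_smul_const' (𝕂 := ℝ) D (-t)
    have h6 := h5.scomp t (hasDerivAt_neg t)
    simpa [neg_smul, one_smul, Function.comp_def] using h6
  have hg' : ∀ t, HasDerivAt (fun t : ℝ => NormedSpace.exp (-(t • D)) * A t) 0 t := by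
    intro t
    have h9 := (he t).mul (hA' t)
    have h10 : -(D * NormedSpace.exp (-(t • D))) * A t
        + NormedSpace.exp (-(t • D)) * (D * A t) = 0 := by
      rw [← mul_assoc, ← (hcomm t).eq, neg_mul, neg_add_cancel]
    rwa [h10] at h9
  have hconst : ∀ t, NormedSpace.exp (-(t • D)) * A t = 1 := by
    intro t
    have h10 := is_const_of_deriv_eq_zero
      (f := fun t : ℝ => NormedSpace.exp (-(t • D)) * A t)
      (fun s => (hg' s).differentiableAt) (fun s => (hg' s).deriv) t 0
    rw [h10]
    simp only [zero_smul, neg_zero, NormedSpace.exp_zero, hA0, one_mul]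
  have hAexp : ∀ t : ℝ, A t = NormedSpace.exp (t • D) := by
    intro t
    have hcc : Commute (t • D) (-(t • D)) := (Commute.refl (t • D)).neg_right
    have h11 : NormedSpace.exp (t • D) * NormedSpace.exp (-(t • D)) = 1 := by
      rw [← NormedSpace.exp_add_of_commute_of_mem_ball (𝕂 := ℝ) hcc
        (by simp [NormedSpace.expSeries_radius_eq_top]) (by simp [NormedSpace.expSeries_radius_eq_top]), add_neg_cancel, NormedSpace.exp_zero]
    calc A t = (NormedSpace.exp (t • D) * NormedSpace.exp (-(t • D))) * A t := by
          rw [h11, one_mul]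
      _ = NormedSpace.exp (t • D) * (NormedSpace.exp (-(t • D)) * A t) := by
          rw [mul_assoc]
      _ = NormedSpace.exp (t • D) := by rw [hconst t, mul_one]
  -- the period gives the identity
  have hAθ : A (θ z) = 1 := by
    have hq : MDifferentiableAt (I.prod 𝓘(ℝ, ℝ)) I (fun p : M × ℝ => Φ p.1 p.2) (z, θ z) :=
      (hΦ_smooth (z, θ z)).mdifferentiableAt (by simp)
    have hθd : MDifferentiableAt I 𝓘(ℝ, ℝ) θ z := (hθ z).mdifferentiableAt (by simp)
    have hpair : MDifferentiableAt I (I.prod 𝓘(ℝ, ℝ)) (fun x : M => (x, θ x)) z :=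
      mdifferentiableAt_id.prodMk hθd
    have hidd : mfderiv I I (fun x : M => Φ x (θ x)) z
        = ContinuousLinearMap.id ℝ (TangentSpace I z) := by
      have h1 : (fun x : M => Φ x (θ x)) = id := funext hθ_per
      rw [h1, mfderiv_id]
    have hco : mfderiv I I (fun x : M => Φ x (θ x)) z
        = (mfderiv (I.prod 𝓘(ℝ, ℝ)) I (fun p : M × ℝ => Φ p.1 p.2) (z, θ z)).comp
          (mfderiv I (I.prod 𝓘(ℝ, ℝ)) (fun x : M => (x, θ x)) z) := mfderiv_comp z hq hpair
    have hpd : mfderiv I (I.prod 𝓘(ℝ, ℝ)) (fun x : M => (x, θ x)) z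
        = (ContinuousLinearMap.id ℝ (TangentSpace I z)).prod (mfderiv I 𝓘(ℝ, ℝ) θ z) := by
      refine (mdifferentiableAt_id.mfderiv_prod hθd).trans ?_
      rw [mfderiv_id]
    rw [hco] at hidd
    refine ContinuousLinearMap.ext fun v => ?_
    have h2 := DFunLike.congr_fun hidd v
    have h4 : mfderiv (I.prod 𝓘(ℝ,ℝ)) I (fun p : M × ℝ => Φ p.1 p.2) (z, θ z)
        ((v, mfderiv I 𝓘(ℝ, ℝ) θ z v) : TangentSpace (I.prod 𝓘(ℝ,ℝ)) (z, θ z))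
        = mfderiv I I (fun x : M => Φ x (θ z)) z v
          + mfderiv 𝓘(ℝ,ℝ) I (fun s : ℝ => Φ z s) (θ z) (mfderiv I 𝓘(ℝ, ℝ) θ z v) :=
      mfderiv_prod_eq_add_apply hq
    have h5 : mfderiv 𝓘(ℝ,ℝ) I (fun s : ℝ => Φ z s) (θ z) (mfderiv I 𝓘(ℝ, ℝ) θ z v) = 0 := by
      have key : ∀ a : ℝ, mfderiv 𝓘(ℝ,ℝ) I (fun s : ℝ => Φ z s) (θ z) a = 0 := by
        intro a
        have l1 : mfderiv 𝓘(ℝ,ℝ) I (fun s : ℝ => Φ z s) (θ z) a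
            = a • mfderiv 𝓘(ℝ,ℝ) I (fun s : ℝ => Φ z s) (θ z) (1:ℝ) := by
          calc mfderiv 𝓘(ℝ,ℝ) I (fun s : ℝ => Φ z s) (θ z) a
              = mfderiv 𝓘(ℝ,ℝ) I (fun s : ℝ => Φ z s) (θ z) (a • (1:ℝ)) := by
                rw [smul_eq_mul, mul_one]
            _ = a • mfderiv 𝓘(ℝ,ℝ) I (fun s : ℝ => Φ z s) (θ z) (1:ℝ) :=
                (mfderiv 𝓘(ℝ,ℝ) I (fun s : ℝ => Φ z s) (θ z)).map_smul a (1:ℝ)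
        have l2 : mfderiv 𝓘(ℝ,ℝ) I (fun s : ℝ => Φ z s) (θ z) (1:ℝ) = (0 : E) := by
          have l3 := hΦ_deriv z (θ z)
          rw [hθ_per z, hz] at l3
          exact l3
        rw [l1, l2]
        exact smul_zero (A := E) a
      exact key _
    have h3 : mfderiv (I.prod 𝓘(ℝ,ℝ)) I (fun p : M × ℝ => Φ p.1 p.2) (z, θ z)
        ((v, mfderiv I 𝓘(ℝ, ℝ) θ z v) : TangentSpace (I.prod 𝓘(ℝ,ℝ)) (z, θ z)) = v := by
      have h2b : mfderiv (I.prod 𝓘(ℝ,ℝ)) I (fun p : M × ℝ => Φ p.1 p.2) (z, θ z)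
          (mfderiv I (I.prod 𝓘(ℝ, ℝ)) (fun x : M => (x, θ x)) z v) = v := h2
      rwa [hpd] at h2b
    have h8 := h4.symm.trans h3
    rw [h5, add_zero] at h8
    exact h8
  refine ⟨D, fun t => hAexp t, ?_⟩
  exact (hAexp (θ z)).symm.trans hAθ
end

section
/- Suppose θ : M → (0,∞) is a smooth strictly positive function with Φ(x, θ(x)) = x for all x ∈ M, let z ∈ M be a singular point of F (F(z) = 0), and let D be the generator of the one-parameter group A_t := mfderiv at z of x ↦ Φ(x,t), i.e. A_t = exp(t·D) for all t. Then there exist integers k, l ≥ 0 with 2k + l = dim M, nonzero real numbers A₁, …, A_k, and a basis of T_zM in which the matrix of D is block-diagonal with k two-by-two blocks [[0, −A_j],[A_j, 0]] and an l×l zero block; equivalently, in suitable local coordinates (x₁,y₁,…,x_k,y_k,t₁,…,t_l) at z the linear part of F at z is −A₁y₁ ∂/∂x₁ + A₁x₁ ∂/∂y₁ + ⋯ − A_k y_k ∂/∂x_k + A_k x_k ∂/∂y_k. -/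
open scoped Manifold

open Module Submodule
open scoped RealInnerProductSpace


open Module Submodule
open scoped RealInnerProductSpace

section Glue
variable {V : Type*} [NormedAddCommGroup V] [InnerProductSpace ℝ V] [FiniteDimensional ℝ V]

noncomputable def glueBasis (P : Submodule ℝ V) {ι κ : Type*} (bP : Basis ι ℝ P)
    (bK : Basis κ ℝ (Pᗮ : Submodule ℝ V)) : Basis (ι ⊕ κ) ℝ V :=
  (bP.prod bK).map (Submodule.prodEquivOfIsCompl _ _ P.isCompl_orthogonal_of_hasOrthogonalProjection)

lemma glueBasis_inl (P : Submodule ℝ V) {ι κ : Type*} (bP : Basis ι ℝ P)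
    (bK : Basis κ ℝ (Pᗮ : Submodule ℝ V)) (i : ι) :
    glueBasis P bP bK (Sum.inl i) = (bP i : V) := by
  simp [glueBasis, Basis.prod_apply, Submodule.coe_prodEquivOfIsCompl']

lemma glueBasis_inr (P : Submodule ℝ V) {ι κ : Type*} (bP : Basis ι ℝ P)
    (bK : Basis κ ℝ (Pᗮ : Submodule ℝ V)) (j : κ) :
    glueBasis P bP bK (Sum.inr j) = (bK j : V) := by
  simp [glueBasis, Basis.prod_apply, Submodule.coe_prodEquivOfIsCompl']
end Glue

def reidxZero (k l : ℕ) : (Unit ⊕ ((Fin k ⊕ Fin k) ⊕ Fin l)) ≃ ((Fin k ⊕ Fin k) ⊕ Fin (l+1)) where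
  toFun x := match x with
    | .inl _ => .inr 0
    | .inr (.inl y) => .inl y
    | .inr (.inr i) => .inr i.succ
  invFun x := match x with
    | .inl y => .inr (.inl y)
    | .inr i => Fin.cases (.inl ()) (fun j => .inr (.inr j)) i
  left_inv x := by rcases x with _ | (y | i) <;> simp
  right_inv x := by
    rcases x with y | i
    · rfl
    · induction i using Fin.cases <;> simp

def reidxRot (k l : ℕ) : (Fin 2 ⊕ ((Fin k ⊕ Fin k) ⊕ Fin l)) ≃ ((Fin (k+1) ⊕ Fin (k+1)) ⊕ Fin l) where
  toFun x := match x with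
    | .inl ⟨0, _⟩ => .inl (.inl 0)
    | .inl ⟨1, _⟩ => .inl (.inr 0)
    | .inr (.inl (.inl j)) => .inl (.inl j.succ)
    | .inr (.inl (.inr j)) => .inl (.inr j.succ)
    | .inr (.inr i) => .inr i
  invFun x := match x with
    | .inl (.inl i) => Fin.cases (.inl 0) (fun j => .inr (.inl (.inl j))) i
    | .inl (.inr i) => Fin.cases (.inl 1) (fun j => .inr (.inl (.inr j))) i
    | .inr i => .inr (.inr i)
  left_inv x := by
    rcases x with i | ((j | j) | i)
    · fin_cases i <;> simp
    · simp
    · simp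
    · rfl
  right_inv x := by
    rcases x with (i | i) | i
    · induction i using Fin.cases <;> simp
    · induction i using Fin.cases <;> simp
    · rfl

universe u

theorem skew_aux : ∀ (n : ℕ), ∀ {V : Type u} [NormedAddCommGroup V] [InnerProductSpace ℝ V]
    [FiniteDimensional ℝ V], ∀ D : V →ₗ[ℝ] V, finrank ℝ V = n →
    (∀ u v : V, ⟪D u, v⟫ = -⟪u, D v⟫) →
    ∃ k l : ℕ, 2 * k + l = n ∧ ∃ a : Fin k → ℝ, (∀ j, a j ≠ 0) ∧
      ∃ b : Basis ((Fin k ⊕ Fin k) ⊕ Fin l) ℝ V,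
        (∀ j : Fin k, D (b (.inl (.inl j))) = a j • b (.inl (.inr j)) ∧
              D (b (.inl (.inr j))) = -(a j) • b (.inl (.inl j))) ∧
        (∀ i : Fin l, D (b (.inr i)) = 0) := by
  intro n
  induction n using Nat.strong_induction_on with
  | _ n IH =>
  intro V _ _ _ D hdim hskew
  by_cases hD0 : D = 0
  · -- zero map : k = 0, l = n
    refine ⟨0, n, by omega, Fin.elim0, fun j => j.elim0, ?_⟩
    have e : ((Fin 0 ⊕ Fin 0) ⊕ Fin n) ≃ Fin n :=
      ⟨fun x => match x with
        | .inl (.inl j) => j.elim0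
        | .inl (.inr j) => j.elim0
        | .inr i => i,
       fun i => .inr i,
       fun x => by rcases x with (j | j) | i; exacts [j.elim0, j.elim0, rfl],
       fun i => rfl⟩
    refine ⟨((finBasis ℝ V).reindex (hdim ▸ Equiv.refl _)).reindex e.symm,
      fun j => j.elim0, fun i => by simp [hD0]⟩
  · -- D ≠ 0
    have hn0 : 0 < n := by
      rcases Nat.eq_zero_or_pos n with h | h
      · exfalso; apply hD0
        have : Subsingleton V := finrank_zero_iff.mp (h ▸ hdim)
        ext x; simp [Subsingleton.elim x 0]
      · exact h
    -- the symmetric operator D ∘ D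
    set S : V →ₗ[ℝ] V := D ∘ₗ D with hS
    have hSsym : S.IsSymmetric := by
      intro u v
      have h1 := hskew (D u) v
      have h2 := hskew u (D v)
      simp only [hS, LinearMap.comp_apply]
      linarith [h1, h2]
    obtain ⟨i0, hi0⟩ : ∃ i : Fin n, True := ⟨⟨0, hn0⟩, trivial⟩
    set ob := hSsym.eigenvectorBasis hdim with hob
    set v : V := ob i0 with hv
    have hv1 : ‖v‖ = 1 := ob.orthonormal.1 i0
    have hvne : v ≠ 0 := by
      intro h; rw [h, norm_zero] at hv1; norm_num at hv1
    set μ : ℝ := hSsym.eigenvalues hdim i0 with hμ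
    have hSv : S v = μ • v :=
      (hSsym.hasEigenvector_eigenvectorBasis hdim i0).apply_eq_smul
    by_cases hDv : D v = 0
    · -- kernel case: add a zero basis vector
      set P : Submodule ℝ V := Submodule.span ℝ (Set.range fun _ : Unit => v) with hP
      have hPv : P = (ℝ ∙ v) := by rw [hP, Set.range_const]
      have hvP : v ∈ P := Submodule.subset_span ⟨(), rfl⟩
      have hli : LinearIndependent ℝ (fun _ : Unit => v) := linearIndependent_unique_iff.mpr hvne
      set bP : Basis Unit ℝ P := Basis.span hli with hbP
      have hInv : ∀ x ∈ (Pᗮ : Submodule ℝ V), D x ∈ (Pᗮ : Submodule ℝ V) := by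
        intro x hx
        rw [Submodule.mem_orthogonal] at hx ⊢
        intro u hu
        rw [hPv, Submodule.mem_span_singleton] at hu
        obtain ⟨c, rfl⟩ := hu
        have : ⟪v, D x⟫ = -⟪D v, x⟫ := by
          rw [real_inner_comm, hskew, real_inner_comm]
        rw [real_inner_smul_left, this, hDv, inner_zero_left]
        ring
      set DK : (Pᗮ : Submodule ℝ V) →ₗ[ℝ] (Pᗮ : Submodule ℝ V) := D.restrict hInv with hDK
      have hskewK : ∀ u w : (Pᗮ : Submodule ℝ V), ⟪DK u, w⟫ = -⟪u, DK w⟫ := by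
        intro u w
        rw [Submodule.coe_inner, Submodule.coe_inner]
        simp only [hDK, LinearMap.restrict_coe_apply]
        exact hskew _ _
      have hdimP : finrank ℝ P = 1 := by rw [hPv]; exact finrank_span_singleton hvne
      have hdimK : finrank ℝ P + finrank ℝ (Pᗮ : Submodule ℝ V) = n := by
        rw [Submodule.finrank_add_finrank_orthogonal, hdim]
      set m := finrank ℝ (Pᗮ : Submodule ℝ V) with hm
      have hmn : m < n := by omega
      obtain ⟨k, l, hkl, a, ha, bK, hb1, hb2⟩ := IH m hmn DK rfl hskewK
      refine ⟨k, l + 1, by omega, a, ha, ?_⟩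
      set b := (glueBasis P bP bK).reindex (reidxZero k l) with hb
      have hbl : ∀ s, b (Sum.inl s) = (bK (Sum.inl s) : V) := by
        intro s
        rw [hb, Basis.reindex_apply]
        have : (reidxZero k l).symm (Sum.inl s) = Sum.inr (Sum.inl s) := rfl
        rw [this, glueBasis_inr]
      have hbr0 : b (Sum.inr 0) = v := by
        rw [hb, Basis.reindex_apply]
        have : (reidxZero k l).symm (Sum.inr 0) = Sum.inl () := by simp [reidxZero]
        rw [this, glueBasis_inl, hbP, Basis.span_apply]
      have hbrs : ∀ i : Fin l, b (Sum.inr i.succ) = (bK (Sum.inr i) : V) := by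
        intro i
        rw [hb, Basis.reindex_apply]
        have : (reidxZero k l).symm (Sum.inr i.succ) = Sum.inr (Sum.inr i) := by simp [reidxZero]
        rw [this, glueBasis_inr]
      have hDcoe : ∀ x : (Pᗮ : Submodule ℝ V), D (x : V) = ((DK x : (Pᗮ : Submodule ℝ V)) : V) := by
        intro x; rw [hDK, LinearMap.restrict_coe_apply]
      refine ⟨b, fun j => ?_, fun i => ?_⟩
      · constructor
        · rw [hbl, hDcoe, hb1 j |>.1]; rw [hbl]; norm_cast
        · rw [hbl, hDcoe, hb1 j |>.2]; rw [hbl]; norm_cast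
      · induction i using Fin.cases with
        | zero => rw [hbr0, hDv]
        | succ i => rw [hbrs, hDcoe, hb2 i]; norm_cast
    · -- rotation case
      have ha : (0:ℝ) < ‖D v‖ := norm_pos_iff.mpr hDv
      set α : ℝ := ‖D v‖ with hα
      have hαne : α ≠ 0 := ne_of_gt ha
      set w : V := α⁻¹ • D v with hw
      have hw1 : ‖w‖ = 1 := by
        rw [hw, norm_smul, norm_inv, Real.norm_eq_abs, abs_of_pos ha, ← hα,
          inv_mul_cancel₀ hαne]
      have hDveq : D v = α • w := by
        rw [hw, smul_smul, mul_inv_cancel₀ hαne, one_smul]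
      have hμval : μ = -(α ^ 2) := by
        have h1 : ⟪S v, v⟫ = μ := by
          rw [hSv, real_inner_smul_left, real_inner_self_eq_norm_sq, hv1]; ring
        have h2 : ⟪S v, v⟫ = -(α ^ 2) := by
          have : ⟪D (D v), v⟫ = -⟪D v, D v⟫ := hskew (D v) v
          simp only [hS, LinearMap.comp_apply]
          rw [this, real_inner_self_eq_norm_sq, hα]
        rw [h1] at h2; exact h2
      have hDw : D w = -α • v := by
        rw [hw, map_smul]
        have : D (D v) = μ • v := hSv
        rw [this, hμval, smul_smul]
        congr 1
        field_simp
      have hvw : ⟪v, w⟫ = 0 := by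
        have h := hskew v v
        have hcomm : ⟪D v, v⟫ = ⟪v, D v⟫ := real_inner_comm v (D v)
        have hz : ⟪v, D v⟫ = 0 := by linarith [h, hcomm]
        rw [hw, real_inner_smul_right, hz, mul_zero]
      set f2 : Fin 2 → V := ![v, w] with hf2
      have hf20 : f2 0 = v := rfl
      have hf21 : f2 1 = w := rfl
      have hwv : ⟪w, v⟫ = 0 := (real_inner_comm v w).trans hvw
      have hON : Orthonormal ℝ f2 := by
        refine ⟨fun i => ?_, fun i j hij => ?_⟩
        · fin_cases i
          · simpa [hf20] using hv1
          · simpa [hf21] using hw1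
        · fin_cases i <;> fin_cases j
          · exact absurd rfl hij
          · simpa [hf20, hf21] using hvw
          · simpa [hf20, hf21] using hwv
          · exact absurd rfl hij
      have hli := hON.linearIndependent
      set P : Submodule ℝ V := Submodule.span ℝ (Set.range f2) with hP
      have hvP : v ∈ P := Submodule.subset_span ⟨0, rfl⟩
      have hwP : w ∈ P := Submodule.subset_span ⟨1, by simp [hf2]⟩
      set bP : Basis (Fin 2) ℝ P := Basis.span hli with hbP
      have hInv : ∀ x ∈ (Pᗮ : Submodule ℝ V), D x ∈ (Pᗮ : Submodule ℝ V) := by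
        intro x hx
        rw [Submodule.mem_orthogonal] at hx ⊢
        have hxv : ⟪v, x⟫ = 0 := hx v hvP
        have hxw : ⟪w, x⟫ = 0 := hx w hwP
        intro u hu
        induction hu using Submodule.span_induction with
        | mem u hu =>
          obtain ⟨i, rfl⟩ := hu
          fin_cases i
          · show ⟪v, D x⟫ = 0
            have : ⟪v, D x⟫ = -⟪D v, x⟫ := by
              rw [real_inner_comm, hskew, real_inner_comm]
            rw [this, hDveq, real_inner_smul_left, hxw]; ring
          · show ⟪w, D x⟫ = 0
            have : ⟪w, D x⟫ = -⟪D w, x⟫ := by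
              rw [real_inner_comm, hskew, real_inner_comm]
            rw [this, hDw, real_inner_smul_left, hxv]; ring
        | zero => simp
        | add u1 u2 _ _ h1 h2 => rw [inner_add_left, h1, h2]; ring
        | smul c u _ h => rw [real_inner_smul_left, h]; ring
      set DK : (Pᗮ : Submodule ℝ V) →ₗ[ℝ] (Pᗮ : Submodule ℝ V) := D.restrict hInv with hDK
      have hskewK : ∀ u w : (Pᗮ : Submodule ℝ V), ⟪DK u, w⟫ = -⟪u, DK w⟫ := by
        intro u w
        rw [Submodule.coe_inner, Submodule.coe_inner]
        simp only [hDK, LinearMap.restrict_coe_apply]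
        exact hskew _ _
      have hdimP : finrank ℝ P = 2 := by
        rw [hP, finrank_span_eq_card hli]
        simp
      have hdimK : finrank ℝ P + finrank ℝ (Pᗮ : Submodule ℝ V) = n := by
        rw [Submodule.finrank_add_finrank_orthogonal, hdim]
      set m := finrank ℝ (Pᗮ : Submodule ℝ V) with hm
      have hmn : m < n := by omega
      obtain ⟨k, l, hkl, a, haj, bK, hb1, hb2⟩ := IH m hmn DK rfl hskewK
      refine ⟨k + 1, l, by omega, Fin.cons α a, ?_, ?_⟩
      · intro j
        induction j using Fin.cases with
        | zero => simpa using hαne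
        | succ j => simpa using haj j
      set b := (glueBasis P bP bK).reindex (reidxRot k l) with hb
      have hb00 : b (Sum.inl (Sum.inl 0)) = v := by
        rw [hb, Basis.reindex_apply]
        have : (reidxRot k l).symm (Sum.inl (Sum.inl 0)) = Sum.inl 0 := by simp [reidxRot]
        rw [this, glueBasis_inl, hbP, Basis.span_apply]
        simp [hf2]
      have hb10 : b (Sum.inl (Sum.inr 0)) = w := by
        rw [hb, Basis.reindex_apply]
        have : (reidxRot k l).symm (Sum.inl (Sum.inr 0)) = Sum.inl 1 := by simp [reidxRot]
        rw [this, glueBasis_inl, hbP, Basis.span_apply]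
        simp [hf2]
      have hb0s : ∀ j : Fin k, b (Sum.inl (Sum.inl j.succ)) = (bK (Sum.inl (Sum.inl j)) : V) := by
        intro j
        rw [hb, Basis.reindex_apply]
        have : (reidxRot k l).symm (Sum.inl (Sum.inl j.succ)) = Sum.inr (Sum.inl (Sum.inl j)) := by
          simp [reidxRot]
        rw [this, glueBasis_inr]
      have hb1s : ∀ j : Fin k, b (Sum.inl (Sum.inr j.succ)) = (bK (Sum.inl (Sum.inr j)) : V) := by
        intro j
        rw [hb, Basis.reindex_apply]
        have : (reidxRot k l).symm (Sum.inl (Sum.inr j.succ)) = Sum.inr (Sum.inl (Sum.inr j)) := by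
          simp [reidxRot]
        rw [this, glueBasis_inr]
      have hbr : ∀ i : Fin l, b (Sum.inr i) = (bK (Sum.inr i) : V) := by
        intro i
        rw [hb, Basis.reindex_apply]
        have : (reidxRot k l).symm (Sum.inr i) = Sum.inr (Sum.inr i) := rfl
        rw [this, glueBasis_inr]
      have hDcoe : ∀ x : (Pᗮ : Submodule ℝ V), D (x : V) = ((DK x : (Pᗮ : Submodule ℝ V)) : V) := by
        intro x; rw [hDK, LinearMap.restrict_coe_apply]
      refine ⟨b, fun j => ?_, fun i => ?_⟩
      · induction j using Fin.cases with
        | zero =>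
          constructor
          · rw [hb00, hb10, hDveq]; simp
          · rw [hb10, hb00, hDw]; simp
        | succ j =>
          constructor
          · rw [hb0s, hDcoe, hb1 j |>.1, hb1s]
            push_cast
            simp
          · rw [hb1s, hDcoe, hb1 j |>.2, hb0s]
            push_cast
            simp
      · rw [hbr, hDcoe, hb2 i]; norm_cast

/-- conjugation of continuous endomorphisms by a continuous linear equiv, as an algebra hom -/
noncomputable def conjAlg {V W : Type*} [NormedAddCommGroup V] [NormedSpace ℝ V]
    [NormedAddCommGroup W] [NormedSpace ℝ W] (e : V ≃L[ℝ] W) :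
    (V →L[ℝ] V) →ₐ[ℝ] (W →L[ℝ] W) where
  toFun A := ((e : V →L[ℝ] W).comp A).comp (e.symm : W →L[ℝ] V)
  map_one' := by ext x; simp
  map_mul' A B := by ext x; simp
  map_zero' := by ext x; simp
  map_add' A B := by ext x; simp
  commutes' r := by ext x; simp [Algebra.algebraMap_eq_smul_one]

theorem conjAlg_exp {V W : Type*} [NormedAddCommGroup V] [NormedSpace ℝ V] [CompleteSpace V]
    [FiniteDimensional ℝ V] [NormedAddCommGroup W] [NormedSpace ℝ W] [CompleteSpace W]
    (e : V ≃L[ℝ] W) (A : V →L[ℝ] V) :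
    conjAlg e (NormedSpace.exp A) = NormedSpace.exp (conjAlg e A) := by
  letI : NormedAlgebra ℚ (V →L[ℝ] V) := NormedAlgebra.restrictScalars ℚ ℝ _
  letI : NormedAlgebra ℚ (W →L[ℝ] W) := NormedAlgebra.restrictScalars ℚ ℝ _
  haveI : FiniteDimensional ℝ (V →L[ℝ] V) := by
    infer_instance
  exact NormedSpace.map_exp (conjAlg e) ((conjAlg e).toLinearMap.continuous_of_finiteDimensional) A

set_option maxHeartbeats 1000000 in
set_option synthInstance.maxHeartbeats 200000 in
theorem generator_skew_basis {W : Type*} [NormedAddCommGroup W] [InnerProductSpace ℝ W]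
    [FiniteDimensional ℝ W] (D₀ : W →L[ℝ] W) (T : ℝ) (hT : 0 < T)
    (hexp : NormedSpace.exp (T • D₀) = 1) :
    ∃ k l : ℕ, 2 * k + l = finrank ℝ W ∧ ∃ a : Fin k → ℝ, (∀ j, a j ≠ 0) ∧
      ∃ b : Basis ((Fin k ⊕ Fin k) ⊕ Fin l) ℝ W,
        (∀ j : Fin k, D₀ (b (.inl (.inl j))) = a j • b (.inl (.inr j)) ∧
              D₀ (b (.inl (.inr j))) = -(a j) • b (.inl (.inl j))) ∧
        (∀ i : Fin l, D₀ (b (.inr i)) = 0) := by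
  letI : NormedAlgebra ℚ (W →L[ℝ] W) := NormedAlgebra.restrictScalars ℚ ℝ _
  set U : ℝ → (W →L[ℝ] W) := fun s => NormedSpace.exp (s • D₀) with hU
  have hUadd : ∀ s t, U (s + t) = U s * U t := by
    intro s t
    rw [hU]
    simp only [add_smul]
    exact NormedSpace.exp_add_of_commute (((Commute.refl D₀).smul_left s).smul_right t)
  have hU0 : U 0 = 1 := by simp [hU, NormedSpace.exp_zero]
  have hUT : U T = 1 := hexp
  have hUcont : Continuous U := by
    exact NormedSpace.exp_continuous.comp (continuous_id.smul continuous_const)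
  have hxcont : ∀ x : W, Continuous fun s => U s x := by
    intro x
    exact ((ContinuousLinearMap.apply ℝ W x).continuous).comp hUcont
  have huvcont : ∀ u v : W, Continuous fun s => ⟪U s u, U s v⟫ := by
    intro u v
    exact (hxcont u).inner (hxcont v)
  have hderiv : ∀ (x : W) (s : ℝ), HasDerivAt (fun r => U r x) (U s (D₀ x)) s := by
    intro x s
    have h := hasDerivAt_exp_smul_const (𝕂 := ℝ) D₀ s
    have h2 := (ContinuousLinearMap.apply ℝ W x).hasFDerivAt.comp_hasDerivAt s h
    exact h2
  set B : W → W → ℝ := fun u v => ∫ s in (0:ℝ)..T, ⟪U s u, U s v⟫ with hB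
  have hint : ∀ u v : W, IntervalIntegrable (fun s => ⟪U s u, U s v⟫)
      MeasureTheory.volume 0 T := fun u v => (huvcont u v).intervalIntegrable 0 T
  have hBskew : ∀ u v, B (D₀ u) v = -B u (D₀ v) := by
    intro u v
    have key : ∫ s in (0:ℝ)..T, (⟪U s u, U s (D₀ v)⟫ + ⟪U s (D₀ u), U s v⟫) =
        ⟪U T u, U T v⟫ - ⟪U 0 u, U 0 v⟫ := by
      apply intervalIntegral.integral_eq_sub_of_hasDerivAt
      · intro s _
        exact (hderiv u s).inner ℝ (hderiv v s)
      · exact ((huvcont u (D₀ v)).add (huvcont (D₀ u) v)).intervalIntegrable 0 T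
    rw [hUT, hU0] at key
    simp only [ContinuousLinearMap.one_apply, sub_self] at key
    rw [intervalIntegral.integral_add (hint u (D₀ v)) (hint (D₀ u) v)] at key
    have : B u (D₀ v) + B (D₀ u) v = 0 := key
    linarith
  have hBpos : ∀ u : W, u ≠ 0 → 0 < B u u := by
    intro u hu
    apply intervalIntegral.intervalIntegral_pos_of_pos (hint u u) _ hT
    intro s
    have : U s u ≠ 0 := by
      intro h0
      apply hu
      have h1 : U (-s) * U s = 1 := by rw [← hUadd, neg_add_cancel, hU0]
      calc u = (U (-s) * U s) u := by rw [h1]; simp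
        _ = U (-s) (U s u) := rfl
        _ = 0 := by rw [h0]; simp
    rw [real_inner_self_eq_norm_sq]
    exact pow_pos (norm_pos_iff.mpr this) 2
  -- bilinear form
  set Bform : LinearMap.BilinForm ℝ W := LinearMap.mk₂ ℝ B
    (fun u1 u2 v => by
      simp only [hB, map_add, inner_add_left]
      exact intervalIntegral.integral_add (hint u1 v) (hint u2 v))
    (fun c u v => by
      simp only [hB, map_smul, real_inner_smul_left, smul_eq_mul]
      exact intervalIntegral.integral_const_mul c _)
    (fun u v1 v2 => by
      simp only [hB, map_add, inner_add_right]
      exact intervalIntegral.integral_add (hint u v1) (hint u v2))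
    (fun c u v => by
      simp only [hB, map_smul, real_inner_smul_right, smul_eq_mul]
      exact intervalIntegral.integral_const_mul c _) with hBform
  have hBapp : ∀ u v, Bform u v = B u v := fun u v => rfl
  have hSymm : Bform.IsSymm := by
    constructor
    intro u v
    simp only [RingHom.id_apply, hBapp]
    exact intervalIntegral.integral_congr fun s _ => real_inner_comm _ _
  haveI : Invertible (2 : ℝ) := invertibleOfNonzero two_ne_zero
  obtain ⟨c, hc⟩ := LinearMap.BilinForm.exists_orthogonal_basis (LinearMap.BilinForm.isSymm_iff.mp hSymm)
  have hd : ∀ i, 0 < Bform (c i) (c i) := fun i => hBpos (c i) (c.ne_zero i)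
  set un : Fin (finrank ℝ W) → ℝˣ := fun i =>
    Units.mk0 ((Real.sqrt (Bform (c i) (c i)))⁻¹)
      (inv_ne_zero (ne_of_gt (Real.sqrt_pos.mpr (hd i)))) with hun
  set c' := c.unitsSMul un with hc'
  have hBc' : ∀ i j, Bform (c' i) (c' j) = if i = j then 1 else 0 := by
    intro i j
    rw [hc', Basis.unitsSMul_apply, Basis.unitsSMul_apply]
    simp only [map_smul, LinearMap.smul_apply, smul_eq_mul, hun, Units.smul_mk0]
    by_cases hij : i = j
    · subst hij
      simp only [if_pos rfl]
      have hs : Real.sqrt (Bform (c i) (c i)) * Real.sqrt (Bform (c i) (c i))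
          = Bform (c i) (c i) := Real.mul_self_sqrt (hd i).le
      have hne : Real.sqrt (Bform (c i) (c i)) ≠ 0 := ne_of_gt (Real.sqrt_pos.mpr (hd i))
      set q := Real.sqrt (Bform (c i) (c i)) with hq
      rw [← hs]
      field_simp
      rw [if_pos trivial]
    · rw [if_neg hij, hc hij]
      ring
  set std := stdOrthonormalBasis ℝ W with hstd
  set e₂ : W ≃ₗ[ℝ] W := c'.equiv std.toBasis (Equiv.refl _) with he₂def
  have he₂ : ∀ i, e₂ (c' i) = std i := by
    intro i
    simp [he₂def, Basis.equiv_apply]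
  have hBinner : ∀ u v, ⟪e₂ u, e₂ v⟫ = Bform u v := by
    set B2 : LinearMap.BilinForm ℝ W := LinearMap.mk₂ ℝ (fun u v => ⟪e₂ u, e₂ v⟫)
      (fun u1 u2 v => by simp [map_add, inner_add_left])
      (fun cc u v => by simp [map_smul, real_inner_smul_left])
      (fun u v1 v2 => by simp [map_add, inner_add_right])
      (fun cc u v => by simp [map_smul, real_inner_smul_right]) with hB2
    have heq : B2 = Bform := by
      refine c'.ext fun i => c'.ext fun j => ?_
      have h1 : B2 (c' i) (c' j) = ⟪std i, std j⟫ := by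
        show ⟪e₂ (c' i), e₂ (c' j)⟫ = _
        rw [he₂, he₂]
      rw [h1, hBc' i j, orthonormal_iff_ite.mp std.orthonormal i j]
    intro u v
    calc ⟪e₂ u, e₂ v⟫ = B2 u v := rfl
      _ = Bform u v := by rw [heq]
  set D₁ : W →ₗ[ℝ] W := (e₂.toLinearMap ∘ₗ (D₀ : W →ₗ[ℝ] W)) ∘ₗ e₂.symm.toLinearMap with hD₁
  have hD₁app : ∀ x, D₁ x = e₂ (D₀ (e₂.symm x)) := fun x => rfl
  have hskew₁ : ∀ u v, ⟪D₁ u, v⟫ = -⟪u, D₁ v⟫ := by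
    intro u v
    have h1 : ⟪D₁ u, v⟫ = Bform (D₀ (e₂.symm u)) (e₂.symm v) := by
      conv_lhs => rw [hD₁app, show v = e₂ (e₂.symm v) from (e₂.apply_symm_apply v).symm]
      rw [hBinner]
    have h2 : ⟪u, D₁ v⟫ = Bform (e₂.symm u) (D₀ (e₂.symm v)) := by
      conv_lhs => rw [hD₁app, show u = e₂ (e₂.symm u) from (e₂.apply_symm_apply u).symm]
      rw [hBinner]
    rw [h1, h2, hBapp, hBapp, hBskew]
  obtain ⟨k, l, hkl, a, ha, b₁, hb1, hb2⟩ := skew_aux (finrank ℝ W) D₁ rfl hskew₁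
  have hcom : ∀ x, D₀ (e₂.symm x) = e₂.symm (D₁ x) := by
    intro x
    rw [hD₁app, e₂.symm_apply_apply]
  refine ⟨k, l, hkl, a, ha, b₁.map e₂.symm, fun j => ?_, fun i => ?_⟩
  · constructor
    · rw [Basis.map_apply, Basis.map_apply, hcom, (hb1 j).1, map_smul]
    · rw [Basis.map_apply, Basis.map_apply, hcom, (hb1 j).2, map_smul]
  · rw [Basis.map_apply, hcom, hb2 i, map_zero]

theorem generator_normal_form {V : Type u} [NormedAddCommGroup V] [NormedSpace ℝ V]
    [FiniteDimensional ℝ V] (D : V →L[ℝ] V) (T : ℝ) (hT : 0 < T)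
    (hexp : NormedSpace.exp (T • D) = 1) :
    ∃ k l : ℕ, 2 * k + l = finrank ℝ V ∧ ∃ a : Fin k → ℝ, (∀ j, a j ≠ 0) ∧
      ∃ b : Basis ((Fin k ⊕ Fin k) ⊕ Fin l) ℝ V,
        (∀ j : Fin k, D (b (.inl (.inl j))) = a j • b (.inl (.inr j)) ∧
              D (b (.inl (.inr j))) = -(a j) • b (.inl (.inl j))) ∧
        (∀ i : Fin l, D (b (.inr i)) = 0) := by
  set e := toEuclidean (E := V) with he
  set D₀ := conjAlg e D with hD₀
  have hexp₀ : NormedSpace.exp (T • D₀) = 1 := by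
    have h1 : conjAlg e (T • D) = T • D₀ := by
      rw [hD₀]; exact map_smul (conjAlg e).toLinearMap T D
    rw [← h1, ← conjAlg_exp, hexp, map_one]
  obtain ⟨k, l, hkl, a, ha, b₁, hb1, hb2⟩ := generator_skew_basis D₀ T hT hexp₀
  have hcom : ∀ x, D (e.toLinearEquiv.symm x) = e.toLinearEquiv.symm (D₀ x) := by
    intro x
    show D (e.symm x) = e.symm (D₀ x)
    have : D₀ x = e (D (e.symm x)) := rfl
    rw [this, e.symm_apply_apply]
  refine ⟨k, l, by simpa using hkl, a, ha, b₁.map e.toLinearEquiv.symm, fun j => ?_, fun i => ?_⟩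
  · constructor
    · rw [Basis.map_apply, Basis.map_apply, hcom, (hb1 j).1, map_smul]
    · rw [Basis.map_apply, Basis.map_apply, hcom, (hb1 j).2, map_smul]
  · rw [Basis.map_apply, hcom, hb2 i, map_zero]


/-- Suppose `θ : M → (0,∞)` is smooth, strictly positive, with
`Φ(x, θ(x)) = x` for all `x`, let `z` be a singular point of `F` (`F z = 0`), and let
`D` be the generator of the one-parameter group `A_t := mfderiv (x ↦ Φ(x,t))` at `z`,
i.e. `A_t = exp(t • D)` for all `t`.  Then there are `k, l ≥ 0` with `2k + l = dim M`,
nonzero reals `A₁, …, A_k`, and a basis of `T_zM` in which the matrix of `D` is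
block-diagonal with `k` blocks `[[0, -A_j], [A_j, 0]]` and an `l × l` zero block;
equivalently, in suitable local coordinates the linear part of `F` at `z` is
`-A₁y₁ ∂/∂x₁ + A₁x₁ ∂/∂y₁ + ⋯ - A_k y_k ∂/∂x_k + A_k x_k ∂/∂y_k`. -/
theorem linear_part_of_periodic_field_at_singular_point
    {E : Type*} [NormedAddCommGroup E] [NormedSpace ℝ E] [FiniteDimensional ℝ E]
    {H : Type*} [TopologicalSpace H] {I : ModelWithCorners ℝ E H}
    {M : Type*} [TopologicalSpace M] [ChartedSpace H M] [IsManifold I (⊤ : ℕ∞) M]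
    -- the smooth vector field `F`
    (F : (x : M) → TangentSpace I x)
    (hF : ContMDiff I I.tangent (⊤ : ℕ∞) (fun x => (⟨x, F x⟩ : TangentBundle I M)))
    -- `Φ` is the global flow of `F`
    (Φ : M → ℝ → M)
    (hΦ_smooth : ContMDiff (I.prod 𝓘(ℝ, ℝ)) I (⊤ : ℕ∞) (fun p : M × ℝ => Φ p.1 p.2))
    (hΦ_zero : ∀ x, Φ x 0 = x)
    (hΦ_add : ∀ x t s, Φ (Φ x t) s = Φ x (t + s))
    (hΦ_deriv : ∀ x t, mfderiv 𝓘(ℝ, ℝ) I (Φ x) t (1 : ℝ) = F (Φ x t))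
    -- the smooth strictly positive period function `θ`
    (θ : M → ℝ) (hθ : ContMDiff I 𝓘(ℝ, ℝ) (⊤ : ℕ∞) θ) (hθ_pos : ∀ x, 0 < θ x)
    (hθ_per : ∀ x, Φ x (θ x) = x)
    -- a singular point `z` of `F`
    (z : M) (hz : F z = 0)
    -- `D` is the generator of the one-parameter group `A_t` of differentials at `z`
    (D : TangentSpace I z →L[ℝ] TangentSpace I z)
    (hD : ∀ t : ℝ, mfderiv I I (fun x => Φ x t) z = NormedSpace.exp (𝔸 := E →L[ℝ] E) (t • D)) :
    ∃ (k l : ℕ), 2 * k + l = Module.finrank ℝ E ∧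
      ∃ a : Fin k → ℝ, (∀ j, a j ≠ 0) ∧
        ∃ b : Module.Basis ((Fin k ⊕ Fin k) ⊕ Fin l) ℝ (TangentSpace I z),
          (∀ j : Fin k,
            D (b (Sum.inl (Sum.inl j))) = a j • b (Sum.inl (Sum.inr j)) ∧
            D (b (Sum.inl (Sum.inr j))) = -(a j) • b (Sum.inl (Sum.inl j))) ∧
          (∀ i : Fin l, D (b (Sum.inr i)) = 0) := by
  classical
  set T : ℝ := θ z with hT
  have hΦz : Φ z T = z := hθ_per z
  set f : M × ℝ → M := fun p => Φ p.1 p.2 with hf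
  set g : M → M × ℝ := fun x => (x, θ x) with hg
  have hfd : MDifferentiableAt (I.prod 𝓘(ℝ, ℝ)) I f (z, T) :=
    hΦ_smooth.mdifferentiableAt (by simp)
  have hgd : MDifferentiableAt I (I.prod 𝓘(ℝ, ℝ)) g z :=
    (contMDiff_id.prodMk hθ).mdifferentiableAt (by simp)
  -- the composition is the identity
  have hcomp : f ∘ g = id := by
    funext x; exact hθ_per x
  have step1 : mfderiv I I (f ∘ g) z = ContinuousLinearMap.id ℝ (TangentSpace I z) := by
    rw [hcomp, mfderiv_id]
  have step2 : mfderiv I I (f ∘ g) z =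
      (mfderiv (I.prod 𝓘(ℝ, ℝ)) I f (g z)).comp (mfderiv I (I.prod 𝓘(ℝ, ℝ)) g z) :=
    mfderiv_comp z hfd hgd
  -- second partial derivative vanishes
  have hsnd : mfderiv 𝓘(ℝ, ℝ) I (Φ z) T = 0 := by
    apply ContinuousLinearMap.ext_ring
    have h := hΦ_deriv z T
    have h2 : F (Φ z T) = 0 := by rw [hΦz]; exact hz
    rw [h2] at h
    exact h.trans rfl
  -- derivative of g
  have step4 : mfderiv I (I.prod 𝓘(ℝ, ℝ)) g z =
      (ContinuousLinearMap.id ℝ (TangentSpace I z)).prod (mfderiv I 𝓘(ℝ, ℝ) θ z) := by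
    have h := (mdifferentiableAt_id (I := I)).mfderiv_prod
      (hθ.mdifferentiableAt (x := z) (by simp))
    rw [mfderiv_id] at h
    exact h
  have hid : (mfderiv (I.prod 𝓘(ℝ, ℝ)) I f (g z)).comp (mfderiv I (I.prod 𝓘(ℝ, ℝ)) g z) =
      ContinuousLinearMap.id ℝ (TangentSpace I z) := by
    rw [← step2, step1]
  have hexp : NormedSpace.exp (𝔸 := E →L[ℝ] E) (T • D) = ContinuousLinearMap.id ℝ (TangentSpace I z) := by
    rw [← hD T]
    ext v
    have hv := DFunLike.congr_fun hid v
    rw [ContinuousLinearMap.comp_apply] at hv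
    have hgv : mfderiv I (I.prod 𝓘(ℝ, ℝ)) g z v
        = (v, mfderiv I 𝓘(ℝ, ℝ) θ z v) := by rw [step4]; rfl
    rw [hgv] at hv
    have hsplit := mfderiv_prod_eq_add_apply (I := I) (I' := 𝓘(ℝ, ℝ)) (I'' := I)
      (f := f) (p := (z, T)) (v := (v, mfderiv I 𝓘(ℝ, ℝ) θ z v)) hfd
    have e1 : mfderiv I I (fun x : M => f (x, (z, T).2)) (z, T).1
        = mfderiv I I (fun x => Φ x T) z := rfl
    have e2 : mfderiv 𝓘(ℝ, ℝ) I (fun t : ℝ => f ((z, T).1, t)) (z, T).2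
        = mfderiv 𝓘(ℝ, ℝ) I (Φ z) T := rfl
    rw [e1, e2, hsnd] at hsplit
    have : mfderiv (I.prod 𝓘(ℝ, ℝ)) I f (g z) (v, mfderiv I 𝓘(ℝ, ℝ) θ z v) =
        mfderiv I I (fun x => Φ x T) z v := by
      rw [show (g z) = (z, T) from rfl]
      rw [hsplit]
      simp
    exact this.symm.trans hv
  obtain ⟨k, l, hkl, a, ha, b, hb1, hb2⟩ :=
    generator_normal_form (V := E) D T (hθ_pos z) (hexp.trans rfl)
  exact ⟨k, l, hkl, a, ha, b, hb1, hb2⟩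
end

section
/- Let Ψ : M × ℝ → M be a smooth flow on M (Ψ smooth, Ψ(x,0) = x, Ψ(Ψ(x,s),t) = Ψ(x,s+t)) such that Ψ(x,1) = x for all x ∈ M. Then there exists a smooth action Γ of the circle group S¹ (the group of complex numbers of norm 1) on M such that Γ(exp(2πit), x) = Ψ(x,t) for all x ∈ M and t ∈ ℝ, where exp(2πit) = e^{2πit} ∈ S¹. -/
open scoped Manifold Real


attribute [local instance] finrank_real_complex_fact'

lemma circle_exp_two_arctan (h : Circle) (hh : 0 < 1 + (h : ℂ).re) :
    Circle.exp (2 * Real.arctan ((h : ℂ).im / (1 + (h : ℂ).re))) = h := by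
  set r := (h : ℂ).re with hr
  set i := (h : ℂ).im with hi
  have hn : r * r + i * i = 1 := by
    have := Circle.normSq_coe h
    rwa [Complex.normSq_apply] at this
  set v := i / (1 + r) with hv
  have hne : (1 + r) ≠ 0 := hh.ne'
  have hv2 : 1 + v ^ 2 = 2 / (1 + r) := by
    rw [hv]; field_simp; nlinarith
  have hpos : (0:ℝ) < 1 + v ^ 2 := by positivity
  have hs : Real.sqrt (1 + v ^ 2) * Real.sqrt (1 + v ^ 2) = 1 + v ^ 2 :=
    Real.mul_self_sqrt hpos.le
  have hcos : Real.cos (2 * Real.arctan v) = r := by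
    rw [Real.cos_two_mul, Real.cos_arctan, div_pow, one_pow, sq, hs, hv2]
    field_simp
    ring
  have hsin : Real.sin (2 * Real.arctan v) = i := by
    rw [Real.sin_two_mul, Real.sin_arctan, Real.cos_arctan]
    have h2 : 2 * (v / Real.sqrt (1 + v ^ 2)) * (1 / Real.sqrt (1 + v ^ 2))
        = 2 * v / (Real.sqrt (1 + v ^ 2) * Real.sqrt (1 + v ^ 2)) := by ring
    rw [h2, hs, hv2, hv]
    field_simp
  apply Circle.ext
  rw [Circle.coe_exp]
  apply Complex.ext
  · rw [Complex.exp_ofReal_mul_I_re]; exact hcos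
  · rw [Complex.exp_ofReal_mul_I_im]; exact hsin

/-- Let `Ψ : M × ℝ → M` be a smooth flow on `M` with `Ψ(x,1) = x` for
all `x`.  Then there is a smooth action `Γ` of the circle group `S¹` on `M` such that
`Γ(exp(2πit), x) = Ψ(x,t)` for all `x ∈ M`, `t ∈ ℝ`. -/
theorem periodic_flow_induces_circle_action
    {E : Type*} [NormedAddCommGroup E] [NormedSpace ℝ E] [FiniteDimensional ℝ E]
    {H : Type*} [TopologicalSpace H] {I : ModelWithCorners ℝ E H}
    {M : Type*} [TopologicalSpace M] [ChartedSpace H M] [IsManifold I (⊤ : ℕ∞) M]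
    -- `Ψ` is a smooth flow on `M`
    (Ψ : M → ℝ → M)
    (hΨ_smooth : ContMDiff (I.prod 𝓘(ℝ, ℝ)) I (⊤ : ℕ∞) (fun p : M × ℝ => Ψ p.1 p.2))
    (hΨ_zero : ∀ x, Ψ x 0 = x)
    (hΨ_add : ∀ x s t, Ψ (Ψ x s) t = Ψ x (s + t))
    -- `Ψ` is `1`-periodic
    (hΨ_per : ∀ x, Ψ x 1 = x) :
    ∃ Γ : Circle → M → M,
      -- `Γ` is a smooth map `S¹ × M → M`
      ContMDiff ((𝓡 1).prod I) I (⊤ : ℕ∞) (fun p : Circle × M => Γ p.1 p.2) ∧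
      -- `Γ` is an action of the group `S¹`
      (∀ x, Γ 1 x = x) ∧
      (∀ g h : Circle, ∀ x, Γ (g * h) x = Γ g (Γ h x)) ∧
      -- `Γ(e^{2πit}, x) = Ψ(x, t)`
      (∀ x : M, ∀ t : ℝ, Γ (Circle.exp (2 * π * t)) x = Ψ x t) := by
  have hπ : (2 * π) ≠ 0 := by positivity
  have hper : ∀ x : M, Function.Periodic (Ψ x) 1 := fun x t => by
    rw [← hΨ_add x t 1, hΨ_per]
  have key : ∀ s t : ℝ, Circle.exp (2 * π * s) = Circle.exp (2 * π * t) →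
      ∀ x, Ψ x s = Ψ x t := by
    intro s t hst x
    rw [Circle.exp_eq_exp] at hst
    obtain ⟨m, hm⟩ := hst
    have hs : s = t + m := by
      apply mul_left_cancel₀ hπ
      rw [hm]; ring
    rw [hs]
    have := ((hper x).int_mul m) t
    rwa [mul_one] at this
  set A : Circle → ℝ := fun g => Complex.arg (g : ℂ) / (2 * π) with hA
  have hexpA : ∀ g : Circle, Circle.exp (2 * π * A g) = g := by
    intro g
    rw [hA]
    simp only
    rw [mul_div_cancel₀ _ hπ]
    exact Circle.exp_arg g
  refine ⟨fun g x => Ψ x (A g), ?_, ?_, ?_, ?_⟩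
  · -- smoothness
    rintro ⟨g₀, x₀⟩
    have hc' : ContMDiff (𝓡 1) 𝓘(ℝ, ℂ) (⊤ : ℕ∞) ((↑) : Metric.sphere (0:ℂ) 1 → ℂ) :=
      contMDiff_coe_sphere
    have hc : ContMDiff (𝓡 1) 𝓘(ℝ, ℂ) (⊤ : ℕ∞) (fun g : Circle => (g : ℂ)) := hc'
    set t₀ : ℝ := A g₀ with ht₀
    set w : Circle → ℝ := fun g =>
      ((g * g₀⁻¹ : Circle) : ℂ).im / (1 + ((g * g₀⁻¹ : Circle) : ℂ).re) with hw
    set F : Circle × M → M := fun p => Ψ (Ψ p.2 t₀) (π⁻¹ * Real.arctan (w p.1)) with hF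
    have hcoe : ContMDiff (𝓡 1) 𝓘(ℝ, ℂ) (⊤ : ℕ∞) (fun g : Circle => ((g * g₀⁻¹ : Circle) : ℂ)) := by
      simp only [Circle.coe_mul]
      exact ((contDiff_id.mul contDiff_const).contMDiff).comp hc
    have hre : ContMDiff (𝓡 1) 𝓘(ℝ, ℝ) (⊤ : ℕ∞)
        (fun g : Circle => 1 + ((g * g₀⁻¹ : Circle) : ℂ).re) :=
      contMDiff_const.add (Complex.reCLM.contDiff.contMDiff.comp hcoe)
    have him : ContMDiff (𝓡 1) 𝓘(ℝ, ℝ) (⊤ : ℕ∞)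
        (fun g : Circle => ((g * g₀⁻¹ : Circle) : ℂ).im) :=
      Complex.imCLM.contDiff.contMDiff.comp hcoe
    have hre0 : 1 + ((g₀ * g₀⁻¹ : Circle) : ℂ).re ≠ 0 := by
      rw [mul_inv_cancel]
      norm_num
    have hwx : ContMDiffAt (𝓡 1) 𝓘(ℝ, ℝ) (⊤ : ℕ∞) w g₀ := (him g₀).div₀ (hre g₀) hre0
    have ha : ContMDiffAt (𝓡 1) 𝓘(ℝ, ℝ) (⊤ : ℕ∞) (fun g => π⁻¹ * Real.arctan (w g)) g₀ :=
      contMDiffAt_const.mul (Real.contDiff_arctan.contDiffAt.comp_contMDiffAt hwx)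
    have h1 : ContMDiff ((𝓡 1).prod I) I (⊤ : ℕ∞) (fun p : Circle × M => Ψ p.2 t₀) :=
      hΨ_smooth.comp (contMDiff_snd.prodMk contMDiff_const)
    have hFsmooth : ContMDiffAt ((𝓡 1).prod I) I (⊤ : ℕ∞) F (g₀, x₀) := by
      have h2 : ContMDiffAt ((𝓡 1).prod I) 𝓘(ℝ, ℝ) (⊤ : ℕ∞)
          (fun p : Circle × M => π⁻¹ * Real.arctan (w p.1)) (g₀, x₀) :=
        ha.comp (g₀, x₀) (f := Prod.fst) contMDiffAt_fst
      exact (hΨ_smooth _).comp (g₀, x₀) ((h1 (g₀, x₀)).prodMk h2)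
    apply hFsmooth.congr_of_eventuallyEq
    have hU : {p : Circle × M | 0 < 1 + ((p.1 * g₀⁻¹ : Circle) : ℂ).re} ∈ nhds (g₀, x₀) := by
      have hopen : IsOpen {p : Circle × M | 0 < 1 + ((p.1 * g₀⁻¹ : Circle) : ℂ).re} := by
        apply isOpen_lt continuous_const
        fun_prop
      apply hopen.mem_nhds
      simp only [Set.mem_setOf_eq, mul_inv_cancel, Circle.coe_one, Complex.one_re]
      norm_num
    filter_upwards [hU] with p hp
    obtain ⟨g, x⟩ := p
    simp only [Set.mem_setOf_eq] at hp
    show Ψ x (A g) = Ψ (Ψ x t₀) (π⁻¹ * Real.arctan (w g))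
    rw [hΨ_add]
    apply key
    rw [hexpA g]
    have htrig := circle_exp_two_arctan (g * g₀⁻¹) hp
    have hsplit : 2 * π * (t₀ + π⁻¹ * Real.arctan (w g))
        = 2 * π * t₀ + 2 * Real.arctan (w g) := by
      field_simp
    rw [hsplit, Circle.exp_add, ht₀, hexpA g₀, hw]
    simp only
    rw [htrig, mul_comm g₀ (g * g₀⁻¹), inv_mul_cancel_right]
  · intro x
    show Ψ x (A 1) = x
    rw [hA]
    simp only [Circle.coe_one, Complex.arg_one, zero_div]
    exact hΨ_zero x
  · intro g h x
    show Ψ x (A (g * h)) = Ψ (Ψ x (A h)) (A g)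
    rw [hΨ_add]
    apply key
    rw [hexpA, mul_add, Circle.exp_add, hexpA, hexpA]
    exact mul_comm g h
  · intro x t
    exact key _ t (hexpA _) x
end
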